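/- arXiv:2505.01971 — 3 statements merged into one kernel-verified Lean document; each statement's English description precedes it below -/
import Mathlib

section
/- Consider a knockout tournament with n = 2^ℓ players (ℓ ≥ 2) of equal strength and a deterministic draw: in round 1 player 2i−1 plays player 2i for i = 1,…,n/2; in each subsequent round the winners of consecutive pairs of matches of the previous round play each other; each match is won by either participant with probability 1/2, independently of all other matches; losers are eliminated. Let S_i be the number of matches won by player i. Then the score vector S = (S_1, …, S_n) is negatively right-tail dependent (NRTD): for all disjoint subsets I, J of {1,…,n} and all x_J ≤ x_J* componentwise such that both conditioning events have positive probability, [S_I | S_J > x_J] ≥_st [S_I | S_J > x_J*]. -/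
open scoped Classical
open Finset

noncomputable section

/-- Probability of the event `A` on a finite sample space with weights `w`. -/
def Pr {Ω : Type*} [Fintype Ω] (w : Ω → ℝ) (A : Ω → Prop) : ℝ :=
  ∑ ω : Ω, if A ω then w ω else 0

/-- Expectation of `f` on a finite sample space with weights `w`. -/
def Expec {Ω : Type*} [Fintype Ω] (w : Ω → ℝ) (f : Ω → ℝ) : ℝ :=
  ∑ ω : Ω, w ω * f ω

/-- Conditional expectation of `f` given the event `A` under weights `w`. -/
def CExp {Ω : Type*} [Fintype Ω] (w : Ω → ℝ) (A : Ω → Prop) (f : Ω → ℝ) : ℝ :=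
  (∑ ω : Ω, if A ω then w ω * f ω else 0) / Pr w A

/-- `[X_I | A] ≤_st [X_I | B]` : the conditional distribution of the subvector `X_I`
given the event `A` is dominated, in the usual stochastic order, by the conditional
distribution of `X_I` given `B`; i.e. conditional expectations of every bounded
coordinatewise increasing function compare. -/
def CondSubvecStochLE {Ω : Type*} [Fintype Ω] {n : ℕ} (w : Ω → ℝ)
    (X : Ω → Fin n → ℝ) (I : Finset (Fin n)) (A B : Ω → Prop) : Prop :=
  ∀ φ : ({i : Fin n // i ∈ I} → ℝ) → ℝ, Monotone φ → (∃ C, ∀ v, |φ v| ≤ C) →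
    CExp w A (fun ω => φ fun i => X ω i.1) ≤ CExp w B (fun ω => φ fun i => X ω i.1)

/-- Negative regression dependence: `[X_I | X_J = x_J] ≥_st [X_I | X_J = x_J*]`
whenever `x_J ≤ x_J*` componentwise and both conditioning events have
positive probability. -/
def IsNRD {Ω : Type*} [Fintype Ω] {n : ℕ} (w : Ω → ℝ) (X : Ω → Fin n → ℝ) : Prop :=
  ∀ I J : Finset (Fin n), Disjoint I J → ∀ x y : Fin n → ℝ, (∀ j ∈ J, x j ≤ y j) →
    0 < Pr w (fun ω => ∀ j ∈ J, X ω j = x j) →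
    0 < Pr w (fun ω => ∀ j ∈ J, X ω j = y j) →
    CondSubvecStochLE w X I (fun ω => ∀ j ∈ J, X ω j = y j)
      (fun ω => ∀ j ∈ J, X ω j = x j)

/-- Negative left-tail dependence: `[X_I | X_J ≤ x_J] ≥_st [X_I | X_J ≤ x_J*]`
whenever `x_J ≤ x_J*` componentwise and both conditioning events have
positive probability. -/
def IsNLTD {Ω : Type*} [Fintype Ω] {n : ℕ} (w : Ω → ℝ) (X : Ω → Fin n → ℝ) : Prop :=
  ∀ I J : Finset (Fin n), Disjoint I J → ∀ x y : Fin n → ℝ, (∀ j ∈ J, x j ≤ y j) →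
    0 < Pr w (fun ω => ∀ j ∈ J, X ω j ≤ x j) →
    0 < Pr w (fun ω => ∀ j ∈ J, X ω j ≤ y j) →
    CondSubvecStochLE w X I (fun ω => ∀ j ∈ J, X ω j ≤ y j)
      (fun ω => ∀ j ∈ J, X ω j ≤ x j)

/-- Negative right-tail dependence: `[X_I | X_J > x_J] ≥_st [X_I | X_J > x_J*]`
whenever `x_J ≤ x_J*` componentwise and both conditioning events have
positive probability. -/
def IsNRTD {Ω : Type*} [Fintype Ω] {n : ℕ} (w : Ω → ℝ) (X : Ω → Fin n → ℝ) : Prop :=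
  ∀ I J : Finset (Fin n), Disjoint I J → ∀ x y : Fin n → ℝ, (∀ j ∈ J, x j ≤ y j) →
    0 < Pr w (fun ω => ∀ j ∈ J, x j < X ω j) →
    0 < Pr w (fun ω => ∀ j ∈ J, y j < X ω j) →
    CondSubvecStochLE w X I (fun ω => ∀ j ∈ J, y j < X ω j)
      (fun ω => ∀ j ∈ J, x j < X ω j)

/-- Negative association on a finite weighted sample space:
`Cov(ψ₁(X_{A₁}), ψ₂(X_{A₂})) ≤ 0` for disjoint `A₁, A₂` and bounded
coordinatewise increasing `ψ₁, ψ₂`. -/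
def IsNAfin {Ω : Type*} [Fintype Ω] {n : ℕ} (w : Ω → ℝ) (X : Ω → Fin n → ℝ) : Prop :=
  ∀ A₁ A₂ : Finset (Fin n), Disjoint A₁ A₂ →
    ∀ ψ₁ : ({i : Fin n // i ∈ A₁} → ℝ) → ℝ, ∀ ψ₂ : ({i : Fin n // i ∈ A₂} → ℝ) → ℝ,
      Monotone ψ₁ → Monotone ψ₂ → (∃ C, ∀ v, |ψ₁ v| ≤ C) → (∃ C, ∀ v, |ψ₂ v| ≤ C) →
      Expec w (fun ω => (ψ₁ fun i => X ω i.1) * (ψ₂ fun i => X ω i.1))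
        ≤ Expec w (fun ω => ψ₁ fun i => X ω i.1) * Expec w (fun ω => ψ₂ fun i => X ω i.1)

/-- The uniform distribution on the permutations of `Fin n`. -/
def unifPerm (n : ℕ) : Equiv.Perm (Fin n) → ℝ := fun _ => (Nat.factorial n : ℝ)⁻¹

/-- The random vector with the permutation distribution on `a`:
`X = (a_{σ(1)}, …, a_{σ(n)})` for a uniformly random permutation `σ`. -/
def permVec {n : ℕ} (a : Fin n → ℝ) (σ : Equiv.Perm (Fin n)) : Fin n → ℝ :=
  fun i => a (σ i)

/-- The sample space of match outcomes of a knockout tournament with `2^ℓ` players: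
`ω r b` is the outcome of the match indexed `b` in round `r+1` (all matches of
round `r+1` have indices `b < 2^(ℓ-1-r)`; the remaining coordinates are unused
padding coins). -/
abbrev TournOmega (ℓ : ℕ) := Fin ℓ → Fin (2 ^ (ℓ - 1)) → Bool

/-- The uniform distribution on match outcomes: all matches are independent fair
coin flips (players of equal strength). -/
def tournUnif (ℓ : ℕ) : TournOmega ℓ → ℝ := fun _ => (Fintype.card (TournOmega ℓ) : ℝ)⁻¹

/-- `tournWinner ℓ ω r b` is the (0-indexed) player winning the sub-tournament among
players `b·2^r, …, (b+1)·2^r - 1` after round `r`.  In round `r+1` the winner of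
block `2b` of level `r` plays the winner of block `2b+1` of level `r`  (so in round 1
player `2b` plays player `2b+1`, and in each subsequent round the winners of
consecutive pairs of matches of the previous round play each other); the outcome bit
`ω r b` decides the match. -/
def tournWinner (ℓ : ℕ) (ω : TournOmega ℓ) : ℕ → ℕ → ℕ
  | 0, b => b
  | r + 1, b =>
    if h : r < ℓ ∧ b < 2 ^ (ℓ - 1) then
      if ω ⟨r, h.1⟩ ⟨b, h.2⟩ then tournWinner ℓ ω r (2 * b)
      else tournWinner ℓ ω r (2 * b + 1)
    else 0

/-- `tournScore ℓ ω i` is the number of matches won by (0-indexed) player `i`: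
the number of rounds `r ∈ {1,…,ℓ}` after which player `i` is still the winner of
its block. -/
def tournScore (ℓ : ℕ) (ω : TournOmega ℓ) : Fin (2 ^ ℓ) → ℝ := fun i =>
  (((Finset.Icc 1 ℓ).filter fun r => tournWinner ℓ ω r (i.1 / 2 ^ r) = i.1).card : ℝ)


namespace KO

variable {ℓ : ℕ}

lemma winner_succ (ω : TournOmega ℓ) {r b : ℕ} (hr : r < ℓ) (hb : b < 2 ^ (ℓ - 1)) :
    tournWinner ℓ ω (r + 1) b =
      if ω ⟨r, hr⟩ ⟨b, hb⟩ then tournWinner ℓ ω r (2 * b)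
      else tournWinner ℓ ω r (2 * b + 1) := by
  rw [tournWinner, dif_pos ⟨hr, hb⟩]

lemma winner_mem (ω : TournOmega ℓ) :
    ∀ r, r ≤ ℓ → ∀ b, b < 2 ^ (ℓ - r) →
      b * 2 ^ r ≤ tournWinner ℓ ω r b ∧ tournWinner ℓ ω r b < (b + 1) * 2 ^ r := by
  intro r
  induction r with
  | zero => intro _ b _; simp [tournWinner]
  | succ r ih =>
    intro hr b hb
    have hrl : r < ℓ := by omega
    have hpow : 2 ^ (ℓ - (r + 1)) * 2 = 2 ^ (ℓ - r) := by
      rw [← pow_succ]; congr 1; omega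
    have hb1 : b < 2 ^ (ℓ - 1) := by
      have : 2 ^ (ℓ - (r+1)) ≤ 2 ^ (ℓ - 1) := Nat.pow_le_pow_right (by norm_num) (by omega)
      omega
    have h2b : 2 * b + 1 < 2 ^ (ℓ - r) := by omega
    have e1 : b * 2 ^ (r + 1) = (2 * b) * 2 ^ r := by rw [pow_succ]; ring
    have e2 : (b + 1) * 2 ^ (r + 1) = (2 * b + 1 + 1) * 2 ^ r := by rw [pow_succ]; ring
    rw [winner_succ ω hrl hb1]
    rcases ih hrl.le (2 * b) (by omega) with ⟨l1, l2⟩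
    rcases ih hrl.le (2 * b + 1) h2b with ⟨l3, l4⟩
    cases ω ⟨r, hrl⟩ ⟨b, hb1⟩ <;> simp only [if_true, if_false, Bool.false_eq_true] <;>
      constructor <;> try omega


lemma winner_lt (ω : TournOmega ℓ) {r b : ℕ} (hr : r ≤ ℓ) (hb : b < 2 ^ (ℓ - r)) :
    tournWinner ℓ ω r b < 2 ^ ℓ := by
  have h := (winner_mem ω r hr b hb).2
  have h2 : (b + 1) * 2 ^ r ≤ 2 ^ (ℓ - r) * 2 ^ r := Nat.mul_le_mul_right _ hb
  have h3 : 2 ^ (ℓ - r) * 2 ^ r = 2 ^ ℓ := by rw [← pow_add]; congr 1; omega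
  omega

lemma winner_div (ω : TournOmega ℓ) {r b : ℕ} (hr : r ≤ ℓ) (hb : b < 2 ^ (ℓ - r)) :
    tournWinner ℓ ω r b / 2 ^ r = b := by
  have h := winner_mem ω r hr b hb
  exact Nat.div_eq_of_lt_le h.1 h.2

lemma winner_proj (ω : TournOmega ℓ) :
    ∀ r, r ≤ ℓ → ∀ b, b < 2 ^ (ℓ - r) → ∀ t, t ≤ r →
      tournWinner ℓ ω t (tournWinner ℓ ω r b / 2 ^ t) = tournWinner ℓ ω r b := by
  intro r
  induction r with
  | zero =>
    intro _ b _ t ht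
    have : t = 0 := by omega
    subst this
    simp [tournWinner]
  | succ r ih =>
    intro hr b hb t ht
    rcases Nat.eq_or_lt_of_le ht with rfl | ht'
    · rw [winner_div ω hr hb]
    · have htr : t ≤ r := by omega
      have hrl : r < ℓ := by omega
      have hb1 : b < 2 ^ (ℓ - 1) := by
        have : 2 ^ (ℓ - (r+1)) ≤ 2 ^ (ℓ - 1) := Nat.pow_le_pow_right (by norm_num) (by omega)
        omega
      have hpow : 2 ^ (ℓ - (r + 1)) * 2 = 2 ^ (ℓ - r) := by rw [← pow_succ]; congr 1; omega
      rw [winner_succ ω hrl hb1]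
      cases ω ⟨r, hrl⟩ ⟨b, hb1⟩ <;> simp only [if_true, if_false, Bool.false_eq_true]
      · exact ih hrl.le (2 * b + 1) (by omega) t htr
      · exact ih hrl.le (2 * b) (by omega) t htr


/-- The score as a natural number. -/
def natScore (ℓ : ℕ) (ω : TournOmega ℓ) (i : ℕ) : ℕ :=
  ((Finset.Icc 1 ℓ).filter fun r => tournWinner ℓ ω r (i / 2 ^ r) = i).card

lemma tournScore_eq (ω : TournOmega ℓ) (i : Fin (2 ^ ℓ)) :
    tournScore ℓ ω i = (natScore ℓ ω i.1 : ℝ) := rfl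

lemma natScore_le (ω : TournOmega ℓ) (i : ℕ) : natScore ℓ ω i ≤ ℓ := by
  have h := Finset.card_filter_le (Finset.Icc 1 ℓ) (fun r => tournWinner ℓ ω r (i / 2 ^ r) = i)
  simpa [natScore] using h

lemma div_lt_pow {i r : ℕ} (hr : r ≤ ℓ) (hi : i < 2 ^ ℓ) : i / 2 ^ r < 2 ^ (ℓ - r) := by
  rw [Nat.div_lt_iff_lt_mul (by positivity)]
  have : 2 ^ (ℓ - r) * 2 ^ r = 2 ^ ℓ := by rw [← pow_add]; congr 1; omega
  omega

lemma natScore_ge_iff (ω : TournOmega ℓ) {i m : ℕ} (hi : i < 2 ^ ℓ) (hm : m ≤ ℓ) :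
    m ≤ natScore ℓ ω i ↔ tournWinner ℓ ω m (i / 2 ^ m) = i := by
  rcases Nat.eq_zero_or_pos m with rfl | hm0
  · simp [tournWinner]
  constructor
  · intro h
    have hex : ∃ s ∈ (Finset.Icc 1 ℓ).filter
        (fun r => tournWinner ℓ ω r (i / 2 ^ r) = i), m ≤ s := by
      by_contra hc
      push_neg at hc
      have hsub : (Finset.Icc 1 ℓ).filter (fun r => tournWinner ℓ ω r (i / 2 ^ r) = i)
          ⊆ Finset.Icc 1 (m - 1) := by
        intro s hs
        have := hc s hs
        have hs' := Finset.mem_filter.1 hs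
        have := Finset.mem_Icc.1 hs'.1
        exact Finset.mem_Icc.2 (by omega)
      have := Finset.card_le_card hsub
      rw [Nat.card_Icc] at this
      unfold natScore at h
      omega
    rcases hex with ⟨s, hs, hms⟩
    rcases Finset.mem_filter.1 hs with ⟨hsI, hws⟩
    have hsℓ := (Finset.mem_Icc.1 hsI).2
    have hproj := winner_proj ω s hsℓ (i / 2 ^ s) (div_lt_pow hsℓ hi) m hms
    rw [hws] at hproj
    exact hproj
  · intro h
    have hsub : Finset.Icc 1 m ⊆ (Finset.Icc 1 ℓ).filter
        (fun r => tournWinner ℓ ω r (i / 2 ^ r) = i) := by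
      intro t htm
      rcases Finset.mem_Icc.1 htm with ⟨ht1, htm'⟩
      refine Finset.mem_filter.2 ⟨Finset.mem_Icc.2 ⟨ht1, by omega⟩, ?_⟩
      have hproj := winner_proj ω m hm (i / 2 ^ m) (div_lt_pow hm hi) t htm'
      rw [h] at hproj
      exact hproj
    have := Finset.card_le_card hsub
    rw [Nat.card_Icc] at this
    unfold natScore
    omega


/-- Flip the outcome of the match `(r, b)`. -/
def flipC (ℓ r b : ℕ) (ω : TournOmega ℓ) : TournOmega ℓ :=
  fun s c => if s.1 = r ∧ c.1 = b then !(ω s c) else ω s c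

lemma flipC_invol (r b : ℕ) : Function.Involutive (flipC ℓ r b) := by
  intro ω
  funext s c
  unfold flipC
  by_cases h : s.1 = r ∧ c.1 = b <;> simp [h]

/-- Flipping coin `(r,b)` does not change winners at nodes whose subtree does
not contain that coin. -/
lemma winner_flip_eq (ω : TournOmega ℓ) (r b : ℕ) :
    ∀ s c, ¬(r < s ∧ b / 2 ^ (s - 1 - r) = c) →
      tournWinner ℓ (flipC ℓ r b ω) s c = tournWinner ℓ ω s c := by
  intro s
  induction s with
  | zero => intro c _; rfl
  | succ s ih =>
    intro c hc
    rw [tournWinner, tournWinner]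
    by_cases h : s < ℓ ∧ c < 2 ^ (ℓ - 1)
    · rw [dif_pos h, dif_pos h]
      have hcoin : flipC ℓ r b ω ⟨s, h.1⟩ ⟨c, h.2⟩ = ω ⟨s, h.1⟩ ⟨c, h.2⟩ := by
        unfold flipC
        rw [if_neg]
        intro ⟨h1, h2⟩
        apply hc
        simp only at h1 h2
        refine ⟨by omega, ?_⟩
        have he0 : s + 1 - 1 - r = 0 := by omega
        rw [he0, pow_zero, Nat.div_one]
        omega
      rw [hcoin]
      have hdd : ∀ c', c' / 2 = c → b / 2 ^ (s - 1 - r) ≠ c' ∨ ¬ r < s := by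
        intro c' hc'
        by_cases hrs : r < s
        · left
          intro he
          apply hc
          refine ⟨by omega, ?_⟩
          have : b / 2 ^ (s - r) = c := by
            have h1 : (2:ℕ) ^ (s - 1 - r) * 2 = 2 ^ (s - r) := by
              rw [← pow_succ]; congr 1; omega
            rw [← hc', ← he, Nat.div_div_eq_div_mul, h1]
          have : s + 1 - 1 - r = s - r := by omega
          rw [this]; assumption
        · right; exact hrs
      have ha : tournWinner ℓ (flipC ℓ r b ω) s (2 * c) = tournWinner ℓ ω s (2 * c) := by
        apply ih
        rcases hdd (2 * c) (by omega) with h' | h' <;> tauto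
      have hb' : tournWinner ℓ (flipC ℓ r b ω) s (2 * c + 1) = tournWinner ℓ ω s (2 * c + 1) := by
        apply ih
        rcases hdd (2 * c + 1) (by omega) with h' | h' <;> tauto
      rw [ha, hb']
    · rw [dif_neg h, dif_neg h]

/-- Flipping coin `(r,b)` swaps the two candidate winners at every node above it. -/
lemma winner_flip_swap (ω : TournOmega ℓ) {r b : ℕ} (hr : r < ℓ) (hb : b < 2 ^ (ℓ - 1 - r)) :
    ∀ s, r < s → s ≤ ℓ → ∀ c, b / 2 ^ (s - 1 - r) = c →
      tournWinner ℓ (flipC ℓ r b ω) s c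
        = Equiv.swap (tournWinner ℓ ω r (2 * b)) (tournWinner ℓ ω r (2 * b + 1))
            (tournWinner ℓ ω s c) := by
  have hb1 : b < 2 ^ (ℓ - 1) := by
    have : 2 ^ (ℓ - 1 - r) ≤ 2 ^ (ℓ - 1) := Nat.pow_le_pow_right (by norm_num) (by omega)
    omega
  have h2b : 2 * b + 1 < 2 ^ (ℓ - r) := by
    have : 2 ^ (ℓ - 1 - r) * 2 = 2 ^ (ℓ - r) := by rw [← pow_succ]; congr 1; omega
    omega
  intro s hs
  induction s, hs using Nat.le_induction with
  | base =>
    intro _ c hc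
    have he0 : r + 1 - 1 - r = 0 := by omega
    rw [he0, pow_zero, Nat.div_one] at hc
    subst hc
    rw [winner_succ (flipC ℓ r b ω) hr hb1, winner_succ ω hr hb1]
    have hcoin : flipC ℓ r b ω ⟨r, hr⟩ ⟨b, hb1⟩ = !(ω ⟨r, hr⟩ ⟨b, hb1⟩) := by
      unfold flipC; rw [if_pos ⟨rfl, rfl⟩]
    have ha : tournWinner ℓ (flipC ℓ r b ω) r (2 * b) = tournWinner ℓ ω r (2 * b) :=
      winner_flip_eq ω r b r (2 * b) (by omega)
    have hb' : tournWinner ℓ (flipC ℓ r b ω) r (2 * b + 1) = tournWinner ℓ ω r (2 * b + 1) :=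
      winner_flip_eq ω r b r (2 * b + 1) (by omega)
    rw [hcoin, ha, hb']
    cases ω ⟨r, hr⟩ ⟨b, hb1⟩ <;> simp [Equiv.swap_apply_left, Equiv.swap_apply_right]
  | succ s hs ih =>
    intro hsl c hc
    have hsl' : s ≤ ℓ := by omega
    have he' : s + 1 - 1 - r = s - r := by omega
    rw [he'] at hc
    set e := b / 2 ^ (s - 1 - r) with hedef
    have hpow2 : (2:ℕ) ^ (s - 1 - r) * 2 = 2 ^ (s - r) := by rw [← pow_succ]; congr 1; omega
    have he2 : e / 2 = c := by
      rw [hedef, Nat.div_div_eq_div_mul, hpow2, hc]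
    have hcb : c ≤ b := by
      rw [← hc]; exact Nat.div_le_self _ _
    have hcl : c < 2 ^ (ℓ - 1) := by omega
    have hsℓ : s < ℓ := by omega
    -- coin unchanged at (s, c)
    have hcoin : flipC ℓ r b ω ⟨s, hsℓ⟩ ⟨c, hcl⟩ = ω ⟨s, hsℓ⟩ ⟨c, hcl⟩ := by
      unfold flipC; rw [if_neg]; intro ⟨h1, _⟩; simp only at h1; omega
    -- bound for children
    have hc2 : 2 * c + 1 < 2 ^ (ℓ - s) := by
      have hsplit : (2:ℕ) ^ (ℓ - 1 - r) = 2 ^ (s - r) * 2 ^ (ℓ - 1 - s) := by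
        rw [← pow_add]; congr 1; omega
      have hclt : c < 2 ^ (ℓ - 1 - s) := by
        rw [← hc]
        exact Nat.div_lt_of_lt_mul (by omega)
      have : (2:ℕ) ^ (ℓ - 1 - s) * 2 = 2 ^ (ℓ - s) := by rw [← pow_succ]; congr 1; omega
      omega
    -- u, v block positions at level s
    have hu2b : tournWinner ℓ ω r (2 * b) / 2 ^ r = 2 * b :=
      winner_div ω hr.le (by omega)
    have hv2b : tournWinner ℓ ω r (2 * b + 1) / 2 ^ r = 2 * b + 1 :=
      winner_div ω hr.le h2b
    have hpowrs : (2:ℕ) ^ r * 2 ^ (s - r) = 2 ^ s := by rw [← pow_add]; congr 1; omega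
    have hue : tournWinner ℓ ω r (2 * b) / 2 ^ s = e := by
      rw [← hpowrs, ← Nat.div_div_eq_div_mul, hu2b]
      have : (2:ℕ) ^ (s - r) = 2 * 2 ^ (s - 1 - r) := by
        rw [(by omega : s - r = (s - 1 - r) + 1), pow_succ]; ring
      rw [this, ← Nat.div_div_eq_div_mul]
      simp [hedef, Nat.mul_div_cancel_left]
    have hve : tournWinner ℓ ω r (2 * b + 1) / 2 ^ s = e := by
      rw [← hpowrs, ← Nat.div_div_eq_div_mul, hv2b]
      have : (2:ℕ) ^ (s - r) = 2 * 2 ^ (s - 1 - r) := by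
        rw [(by omega : s - r = (s - 1 - r) + 1), pow_succ]; ring
      rw [this, ← Nat.div_div_eq_div_mul]
      have : (2 * b + 1) / 2 = b := by omega
      rw [this]
    -- for the child not containing the coin, the winner is fixed by the swap
    have hfix : ∀ d, d < 2 ^ (ℓ - s) → d ≠ e →
        Equiv.swap (tournWinner ℓ ω r (2 * b)) (tournWinner ℓ ω r (2 * b + 1))
          (tournWinner ℓ ω s d) = tournWinner ℓ ω s d := by
      intro d hd hde
      have hwd : tournWinner ℓ ω s d / 2 ^ s = d := winner_div ω hsl' hd
      apply Equiv.swap_apply_of_ne_of_ne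
      · intro hcontra; apply hde; rw [← hwd, hcontra, hue]
      · intro hcontra; apply hde; rw [← hwd, hcontra, hve]
    have hflipeq : ∀ d, d ≠ e → tournWinner ℓ (flipC ℓ r b ω) s d = tournWinner ℓ ω s d := by
      intro d hde
      exact winner_flip_eq ω r b s d (by rw [← hedef] ; intro ⟨_, h2⟩; exact hde h2.symm)
    have hchild : ∀ d, d < 2 ^ (ℓ - s) → d / 2 = c →
        tournWinner ℓ (flipC ℓ r b ω) s d
          = Equiv.swap (tournWinner ℓ ω r (2 * b)) (tournWinner ℓ ω r (2 * b + 1))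
              (tournWinner ℓ ω s d) := by
      intro d hd hdc
      by_cases hde : d = e
      · rw [hde]
        exact ih hsl' e hedef.symm
      · rw [hflipeq d hde, hfix d hd hde]
    rw [winner_succ (flipC ℓ r b ω) hsℓ hcl, winner_succ ω hsℓ hcl, hcoin]
    rw [hchild (2 * c) (by omega) (by omega), hchild (2 * c + 1) (by omega) (by omega)]
    rw [apply_ite (Equiv.swap (tournWinner ℓ ω r (2 * b)) (tournWinner ℓ ω r (2 * b + 1)))]


/-- The winners of the two children blocks of the coin `(r,b)` sit, at any level
`s > r`, in the block `b / 2^(s-1-r)`. -/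
lemma winner_child_div (ω : TournOmega ℓ) {r b : ℕ} (hr : r < ℓ) (hb : b < 2 ^ (ℓ - 1 - r))
    {s : ℕ} (hrs : r < s) (hsl : s ≤ ℓ) :
    tournWinner ℓ ω r (2 * b) / 2 ^ s = b / 2 ^ (s - 1 - r) ∧
      tournWinner ℓ ω r (2 * b + 1) / 2 ^ s = b / 2 ^ (s - 1 - r) := by
  have h2b : 2 * b + 1 < 2 ^ (ℓ - r) := by
    have : 2 ^ (ℓ - 1 - r) * 2 = 2 ^ (ℓ - r) := by rw [← pow_succ]; congr 1; omega
    omega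
  have hu2b : tournWinner ℓ ω r (2 * b) / 2 ^ r = 2 * b := winner_div ω hr.le (by omega)
  have hv2b : tournWinner ℓ ω r (2 * b + 1) / 2 ^ r = 2 * b + 1 := winner_div ω hr.le h2b
  have hpowrs : (2:ℕ) ^ r * 2 ^ (s - r) = 2 ^ s := by rw [← pow_add]; congr 1; omega
  have hsr : (2:ℕ) ^ (s - r) = 2 * 2 ^ (s - 1 - r) := by
    rw [(by omega : s - r = (s - 1 - r) + 1), pow_succ]; ring
  constructor
  · rw [← hpowrs, ← Nat.div_div_eq_div_mul, hu2b, hsr, ← Nat.div_div_eq_div_mul]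
    simp [Nat.mul_div_cancel_left]
  · rw [← hpowrs, ← Nat.div_div_eq_div_mul, hv2b, hsr, ← Nat.div_div_eq_div_mul]
    have : (2 * b + 1) / 2 = b := by omega
    rw [this]

/-- Flipping coin `(r,b)` swaps the scores of the two winners of the children
blocks of that coin, and leaves all other scores unchanged. -/
lemma natScore_flip (ω : TournOmega ℓ) {r b : ℕ} (hr : r < ℓ) (hb : b < 2 ^ (ℓ - 1 - r))
    {p : ℕ} (hp : p < 2 ^ ℓ) :
    natScore ℓ (flipC ℓ r b ω) p
      = natScore ℓ ω
          (Equiv.swap (tournWinner ℓ ω r (2 * b)) (tournWinner ℓ ω r (2 * b + 1)) p) := by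
  have h2b : 2 * b + 1 < 2 ^ (ℓ - r) := by
    have : 2 ^ (ℓ - 1 - r) * 2 = 2 ^ (ℓ - r) := by rw [← pow_succ]; congr 1; omega
    omega
  set u := tournWinner ℓ ω r (2 * b) with hu
  set v := tournWinner ℓ ω r (2 * b + 1) with hv
  set σ := Equiv.swap u v with hσ
  unfold natScore
  congr 1
  refine Finset.filter_congr ?_
  intro s hsI
  rcases Finset.mem_Icc.1 hsI with ⟨hs1, hsℓ⟩
  by_cases hcont : r < s ∧ b / 2 ^ (s - 1 - r) = p / 2 ^ s
  · -- containing node : winners get swapped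
    have hswap := winner_flip_swap ω hr hb s hcont.1 hsℓ (p / 2 ^ s) hcont.2
    rw [hswap]
    have hqdiv : σ p / 2 ^ s = p / 2 ^ s := by
      rcases winner_child_div ω hr hb hcont.1 hsℓ with ⟨hud, hvd⟩
      by_cases hpu : p = u
      · rw [hpu, hσ, Equiv.swap_apply_left, hvd, ← hud]
      · by_cases hpv : p = v
        · rw [hpv, hσ, Equiv.swap_apply_right, hud, ← hvd]
        · rw [hσ, Equiv.swap_apply_of_ne_of_ne hpu hpv]
    rw [hqdiv]
    constructor
    · intro h
      have := congrArg σ h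
      rwa [hσ, Equiv.swap_apply_self] at this
    · intro h
      rw [h, hσ, Equiv.swap_apply_self]
  · -- node not containing the coin
    have heq : tournWinner ℓ (flipC ℓ r b ω) s (p / 2 ^ s) = tournWinner ℓ ω s (p / 2 ^ s) :=
      winner_flip_eq ω r b s (p / 2 ^ s) hcont
    rw [heq]
    by_cases hpu : p = u
    · -- here s ≤ r, and both statements are true
      have hsr : s ≤ r := by
        by_contra hsr
        have hrs : r < s := by omega
        exact hcont ⟨hrs, by
          rw [hpu, ← (winner_child_div ω hr hb hrs hsℓ).1]⟩
      have hL : tournWinner ℓ ω s (u / 2 ^ s) = u :=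
        winner_proj ω r hr.le (2 * b) (by omega) s hsr
      have hR : tournWinner ℓ ω s (v / 2 ^ s) = v :=
        winner_proj ω r hr.le (2 * b + 1) h2b s hsr
      rw [hpu, hσ, Equiv.swap_apply_left]
      simp [hL, hR]
    · by_cases hpv : p = v
      · have hsr : s ≤ r := by
          by_contra hsr
          have hrs : r < s := by omega
          exact hcont ⟨hrs, by
            rw [hpv, ← (winner_child_div ω hr hb hrs hsℓ).2]⟩
        have hL : tournWinner ℓ ω s (u / 2 ^ s) = u :=
          winner_proj ω r hr.le (2 * b) (by omega) s hsr
        have hR : tournWinner ℓ ω s (v / 2 ^ s) = v :=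
          winner_proj ω r hr.le (2 * b + 1) h2b s hsr
        rw [hpv, hσ, Equiv.swap_apply_right]
        simp [hL, hR]
      · rw [hσ, Equiv.swap_apply_of_ne_of_ne hpu hpv]


/-- If `j` wins its first `m0` rounds, then flipping the coin of the round-`(m0+1)`
match of `j`'s block exchanges the score of `j` with the score of the winner `k` of
the sibling block, leaves all other scores unchanged; exactly one of `j`, `k` wins
that match. -/
lemma flip_score_swap (ω : TournOmega ℓ) {m0 j : ℕ} (hm0 : m0 < ℓ) (hj : j < 2 ^ ℓ)
    (hjw : m0 ≤ natScore ℓ ω j) :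
    ∃ k, k < 2 ^ ℓ ∧ k ≠ j ∧ m0 ≤ natScore ℓ ω k ∧ k / 2 ^ (m0 + 1) = j / 2 ^ (m0 + 1) ∧
      natScore ℓ (flipC ℓ m0 (j / 2 ^ (m0 + 1)) ω) j = natScore ℓ ω k ∧
      natScore ℓ (flipC ℓ m0 (j / 2 ^ (m0 + 1)) ω) k = natScore ℓ ω j ∧
      (∀ p, p < 2 ^ ℓ → p ≠ j → p ≠ k →
        natScore ℓ (flipC ℓ m0 (j / 2 ^ (m0 + 1)) ω) p = natScore ℓ ω p) ∧
      (m0 + 1 ≤ natScore ℓ ω j ∨ m0 + 1 ≤ natScore ℓ ω k) ∧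
      ¬(m0 + 1 ≤ natScore ℓ ω j ∧ m0 + 1 ≤ natScore ℓ ω k) := by
  set b := j / 2 ^ (m0 + 1) with hbdef
  have hm1 : m0 + 1 ≤ ℓ := hm0
  have hb : b < 2 ^ (ℓ - 1 - m0) := by
    have h1 := div_lt_pow (ℓ := ℓ) hm1 hj
    have he : ℓ - (m0 + 1) = ℓ - 1 - m0 := by omega
    rw [he] at h1
    exact h1
  have h2b : 2 * b + 1 < 2 ^ (ℓ - m0) := by
    have : 2 ^ (ℓ - 1 - m0) * 2 = 2 ^ (ℓ - m0) := by rw [← pow_succ]; congr 1; omega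
    omega
  set u := tournWinner ℓ ω m0 (2 * b) with hu
  set v := tournWinner ℓ ω m0 (2 * b + 1) with hv
  have hul : u < 2 ^ ℓ := winner_lt ω hm0.le (by omega)
  have hvl : v < 2 ^ ℓ := winner_lt ω hm0.le h2b
  have hudiv : u / 2 ^ m0 = 2 * b := winner_div ω hm0.le (by omega)
  have hvdiv : v / 2 ^ m0 = 2 * b + 1 := winner_div ω hm0.le h2b
  have huv : u ≠ v := fun h => by rw [h, hvdiv] at hudiv; omega
  have hus : m0 ≤ natScore ℓ ω u := (natScore_ge_iff ω hul hm0.le).2 (by rw [hudiv])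
  have hvs : m0 ≤ natScore ℓ ω v := (natScore_ge_iff ω hvl hm0.le).2 (by rw [hvdiv])
  have hud2 : u / 2 ^ (m0 + 1) = b := by
    rw [pow_succ, ← Nat.div_div_eq_div_mul, hudiv]; omega
  have hvd2 : v / 2 ^ (m0 + 1) = b := by
    rw [pow_succ, ← Nat.div_div_eq_div_mul, hvdiv]; omega
  have hjuv : j = u ∨ j = v := by
    have hw : tournWinner ℓ ω m0 (j / 2 ^ m0) = j := (natScore_ge_iff ω hj hm0.le).1 hjw
    have hdd : j / 2 ^ m0 / 2 = b := by rw [Nat.div_div_eq_div_mul, ← pow_succ, hbdef]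
    have hor : j / 2 ^ m0 = 2 * b ∨ j / 2 ^ m0 = 2 * b + 1 := by omega
    rcases hor with h | h
    · left; rw [← hw, h]
    · right; rw [← hw, h]
  have hcl : b < 2 ^ (ℓ - 1) := by
    have : (2:ℕ) ^ (ℓ - 1 - m0) ≤ 2 ^ (ℓ - 1) := Nat.pow_le_pow_right (by norm_num) (by omega)
    omega
  have hWb : tournWinner ℓ ω (m0 + 1) b = u ∨ tournWinner ℓ ω (m0 + 1) b = v := by
    rw [winner_succ ω hm0 hcl]
    cases ω ⟨m0, hm0⟩ ⟨b, hcl⟩ <;> simp [hu, hv]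
  have hchu : m0 + 1 ≤ natScore ℓ ω u ↔ tournWinner ℓ ω (m0 + 1) b = u := by
    rw [natScore_ge_iff ω hul hm1, hud2]
  have hchv : m0 + 1 ≤ natScore ℓ ω v ↔ tournWinner ℓ ω (m0 + 1) b = v := by
    rw [natScore_ge_iff ω hvl hm1, hvd2]
  have hflip : ∀ p, p < 2 ^ ℓ →
      natScore ℓ (flipC ℓ m0 b ω) p = natScore ℓ ω (Equiv.swap u v p) :=
    fun p hp => natScore_flip ω hm0 hb hp
  have hnotboth : ¬(m0 + 1 ≤ natScore ℓ ω u ∧ m0 + 1 ≤ natScore ℓ ω v) := by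
    rintro ⟨a1, a2⟩
    exact huv ((hchu.1 a1).symm.trans (hchv.1 a2))
  have horone : m0 + 1 ≤ natScore ℓ ω u ∨ m0 + 1 ≤ natScore ℓ ω v := by
    rcases hWb with h | h
    · exact Or.inl (hchu.2 h)
    · exact Or.inr (hchv.2 h)
  rcases hjuv with h | h
  · -- j = u, take k = v
    refine ⟨v, hvl, by rw [h]; exact huv.symm, hvs, by rw [hvd2], ?_, ?_, ?_, ?_, ?_⟩
    · rw [h, hflip u hul, Equiv.swap_apply_left]
    · rw [hflip v hvl, Equiv.swap_apply_right, h]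
    · intro p hp hpj hpv
      rw [hflip p hp, Equiv.swap_apply_of_ne_of_ne (by rw [← h]; exact hpj) hpv]
    · rw [h]; exact horone
    · rw [h]; exact hnotboth
  · -- j = v, take k = u
    refine ⟨u, hul, by rw [h]; exact huv, hus, by rw [hud2], ?_, ?_, ?_, ?_, ?_⟩
    · rw [h, hflip v hvl, Equiv.swap_apply_right]
    · rw [hflip u hul, Equiv.swap_apply_left, h]
    · intro p hp hpj hpu
      rw [hflip p hp, Equiv.swap_apply_of_ne_of_ne hpu (by rw [← h]; exact hpj)]
    · rw [h]; exact horone.symm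
    · rw [h]; intro hb2; exact hnotboth ⟨hb2.2, hb2.1⟩

/-- Two distinct players in the same block cannot both win through round `m`. -/
lemma score_unique (ω : TournOmega ℓ) {m p q : ℕ} (hm : m ≤ ℓ) (hp : p < 2 ^ ℓ)
    (hq : q < 2 ^ ℓ) (h1 : m ≤ natScore ℓ ω p) (h2 : m ≤ natScore ℓ ω q)
    (hdiv : p / 2 ^ m = q / 2 ^ m) : p = q := by
  have e1 := (natScore_ge_iff ω hp hm).1 h1
  have e2 := (natScore_ge_iff ω hq hm).1 h2
  rw [hdiv] at e1
  rw [← e1, e2]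


/-- The event that every player in `J` wins at least its first `M j` rounds. -/
def Ev (ℓ : ℕ) (J : Finset (Fin (2 ^ ℓ))) (M : Fin (2 ^ ℓ) → ℕ) (ω : TournOmega ℓ) : Prop :=
  ∀ j ∈ J, M j ≤ natScore ℓ ω j.1

lemma Ev_mono {J : Finset (Fin (2 ^ ℓ))} {M M' : Fin (2 ^ ℓ) → ℕ}
    (h : ∀ j ∈ J, M j ≤ M' j) {ω : TournOmega ℓ} (hω : Ev ℓ J M' ω) : Ev ℓ J M ω :=
  fun j hj => le_trans (h j hj) (hω j hj)

lemma step_forward {J : Finset (Fin (2 ^ ℓ))} {j0 : Fin (2 ^ ℓ)} (hj0 : j0 ∈ J)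
    {M : Fin (2 ^ ℓ) → ℕ} (hm0 : M j0 < ℓ) {ω : TournOmega ℓ}
    (hω : Ev ℓ J (Function.update M j0 (M j0 + 1)) ω) :
    Ev ℓ J M (flipC ℓ (M j0) (j0.1 / 2 ^ (M j0 + 1)) ω) ∧
    ¬ Ev ℓ J (Function.update M j0 (M j0 + 1)) (flipC ℓ (M j0) (j0.1 / 2 ^ (M j0 + 1)) ω) ∧
    ∀ i : Fin (2 ^ ℓ), i ≠ j0 →
      natScore ℓ ω i.1 ≤ natScore ℓ (flipC ℓ (M j0) (j0.1 / 2 ^ (M j0 + 1)) ω) i.1 := by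
  have hj0w : M j0 + 1 ≤ natScore ℓ ω j0.1 := by
    have := hω j0 hj0; rwa [Function.update_self] at this
  obtain ⟨k, hkl, hkj, hk0, hkdiv, hfj, hfk, hfp, hone, hnb⟩ :=
    flip_score_swap ω hm0 j0.2 (by omega)
  have hkm : natScore ℓ ω k = M j0 := by
    have hnk : ¬ (M j0 + 1 ≤ natScore ℓ ω k) := fun h => hnb ⟨hj0w, h⟩
    omega
  refine ⟨?_, ?_, ?_⟩
  · intro j hj
    by_cases hjj : j = j0
    · subst hjj; rw [hfj, hkm]
    · have hMj : M j ≤ natScore ℓ ω j.1 := by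
        have := hω j hj; rwa [Function.update_of_ne hjj] at this
      by_cases hjk : j.1 = k
      · rw [hjk, hfk]
        rw [hjk, hkm] at hMj
        omega
      · rw [hfp j.1 j.2 (fun h => hjj (Fin.ext h)) hjk]
        exact hMj
  · intro hcon
    have := hcon j0 hj0
    rw [Function.update_self, hfj, hkm] at this
    omega
  · intro i hij
    by_cases hik : i.1 = k
    · rw [hik, hfk]; omega
    · rw [hfp i.1 i.2 (fun h => hij (Fin.ext h)) hik]

lemma step_backward {J : Finset (Fin (2 ^ ℓ))} {j0 : Fin (2 ^ ℓ)} (hj0 : j0 ∈ J)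
    {M : Fin (2 ^ ℓ) → ℕ} (hm0 : M j0 < ℓ)
    (hEx : ∃ ω0, Ev ℓ J (Function.update M j0 (M j0 + 1)) ω0)
    {ω : TournOmega ℓ} (hB : Ev ℓ J M ω)
    (hnA : ¬ Ev ℓ J (Function.update M j0 (M j0 + 1)) ω) :
    Ev ℓ J (Function.update M j0 (M j0 + 1)) (flipC ℓ (M j0) (j0.1 / 2 ^ (M j0 + 1)) ω) := by
  have hj0m : M j0 ≤ natScore ℓ ω j0.1 := hB j0 hj0
  have hj0lt : ¬ (M j0 + 1 ≤ natScore ℓ ω j0.1) := by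
    intro hcon
    apply hnA
    intro j hj
    by_cases hjj : j = j0
    · subst hjj; rw [Function.update_self]; exact hcon
    · rw [Function.update_of_ne hjj]; exact hB j hj
  obtain ⟨k, hkl, hkj, hk0, hkdiv, hfj, hfk, hfp, hone, hnb⟩ :=
    flip_score_swap ω hm0 j0.2 hj0m
  have hkbig : M j0 + 1 ≤ natScore ℓ ω k := by
    rcases hone with h | h
    · exact absurd h hj0lt
    · exact h
  intro j hj
  by_cases hjj : j = j0
  · subst hjj; rw [Function.update_self, hfj]; exact hkbig
  · rw [Function.update_of_ne hjj]
    by_cases hjk : j.1 = k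
    · obtain ⟨ω0, hω0⟩ := hEx
      have h1 : M j0 + 1 ≤ natScore ℓ ω0 j0.1 := by
        have := hω0 j0 hj0; rwa [Function.update_self] at this
      have h2 : M j ≤ natScore ℓ ω0 j.1 := by
        have := hω0 j hj; rwa [Function.update_of_ne hjj] at this
      have hMj : M j ≤ M j0 := by
        by_contra hcon
        have h3 : M j0 + 1 ≤ natScore ℓ ω0 j.1 := by omega
        have h4 := score_unique ω0 (show M j0 + 1 ≤ ℓ from hm0) j.2 j0.2 h3 h1
          (by rw [hjk, hkdiv])
        exact hkj (by rw [← hjk, h4])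
      rw [hjk, hfk]
      omega
    · rw [hfp j.1 j.2 (fun h => hjj (Fin.ext h)) hjk]; exact hB j hj

lemma step_iff {J : Finset (Fin (2 ^ ℓ))} {j0 : Fin (2 ^ ℓ)} (hj0 : j0 ∈ J)
    {M : Fin (2 ^ ℓ) → ℕ} (hm0 : M j0 < ℓ)
    (hEx : ∃ ω0, Ev ℓ J (Function.update M j0 (M j0 + 1)) ω0) (ω : TournOmega ℓ) :
    Ev ℓ J (Function.update M j0 (M j0 + 1)) ω ↔
      (Ev ℓ J M (flipC ℓ (M j0) (j0.1 / 2 ^ (M j0 + 1)) ω) ∧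
        ¬ Ev ℓ J (Function.update M j0 (M j0 + 1))
            (flipC ℓ (M j0) (j0.1 / 2 ^ (M j0 + 1)) ω)) := by
  constructor
  · intro h
    exact ⟨(step_forward hj0 hm0 h).1, (step_forward hj0 hm0 h).2.1⟩
  · rintro ⟨h1, h2⟩
    have h3 := step_backward hj0 hm0 hEx h1 h2
    rwa [flipC_invol (M j0) (j0.1 / 2 ^ (M j0 + 1)) ω] at h3


section ProbHelpers

variable {Ω' : Type*} [Fintype Ω']

lemma Pr_pos (w : Ω' → ℝ) (hw : ∀ ω, 0 < w ω) {A : Ω' → Prop} (hA : ∃ ω, A ω) :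
    0 < Pr w A := by
  obtain ⟨ω0, h0⟩ := hA
  unfold Pr
  apply Finset.sum_pos' (fun ω _ => by by_cases h : A ω <;> simp [h, (hw ω).le])
  exact ⟨ω0, Finset.mem_univ _, by simp [h0, hw ω0]⟩

lemma exists_of_Pr_pos {w : Ω' → ℝ} {A : Ω' → Prop} (h : 0 < Pr w A) : ∃ ω, A ω := by
  by_contra hc
  push_neg at hc
  have h0 : Pr w A = 0 := by
    unfold Pr; apply Finset.sum_eq_zero; intro ω _; simp [hc ω]
  rw [h0] at h; exact lt_irrefl _ h

lemma CExp_congr (w : Ω' → ℝ) {A B : Ω' → Prop} (h : ∀ ω, A ω ↔ B ω) (f : Ω' → ℝ) :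
    CExp w A f = CExp w B f := by
  have hAB : A = B := funext fun ω => propext (h ω)
  rw [hAB]

end ProbHelpers

lemma tournUnif_pos (ℓ : ℕ) (ω : TournOmega ℓ) : 0 < tournUnif ℓ ω := by
  unfold tournUnif
  have : (0:ℝ) < (Fintype.card (TournOmega ℓ) : ℝ) := by exact_mod_cast Fintype.card_pos
  positivity

lemma step_CExp {J : Finset (Fin (2 ^ ℓ))} {j0 : Fin (2 ^ ℓ)} (hj0 : j0 ∈ J)
    {M : Fin (2 ^ ℓ) → ℕ} (hm0 : M j0 < ℓ)
    (hEx : ∃ ω0, Ev ℓ J (Function.update M j0 (M j0 + 1)) ω0)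
    (I : Finset (Fin (2 ^ ℓ))) (hIJ : Disjoint I J)
    (φ : ({i : Fin (2 ^ ℓ) // i ∈ I} → ℝ) → ℝ) (hφ : Monotone φ) :
    CExp (tournUnif ℓ) (Ev ℓ J (Function.update M j0 (M j0 + 1)))
        (fun ω => φ fun i => tournScore ℓ ω i.1)
      ≤ CExp (tournUnif ℓ) (Ev ℓ J M) (fun ω => φ fun i => tournScore ℓ ω i.1) := by
  classical
  set w : TournOmega ℓ → ℝ := tournUnif ℓ with hw
  set Φ : TournOmega ℓ → ℝ := fun ω => φ fun i => tournScore ℓ ω i.1 with hΦ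
  set A : TournOmega ℓ → Prop := Ev ℓ J (Function.update M j0 (M j0 + 1)) with hA
  set B : TournOmega ℓ → Prop := Ev ℓ J M with hB
  set F : TournOmega ℓ → TournOmega ℓ := flipC ℓ (M j0) (j0.1 / 2 ^ (M j0 + 1)) with hF
  have hinv : Function.Involutive F := flipC_invol _ _
  have hw0 : ∀ ω : TournOmega ℓ, 0 < w ω := tournUnif_pos ℓ
  have hwC : ∀ ω ω' : TournOmega ℓ, w ω = w ω' := fun _ _ => rfl
  have hAB : ∀ ω, A ω → B ω := by
    intro ω h
    refine Ev_mono (fun j hj => ?_) h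
    by_cases hjj : j = j0
    · subst hjj; rw [Function.update_self]; omega
    · rw [Function.update_of_ne hjj]
  have hiff : ∀ ω, A ω ↔ (B (F ω) ∧ ¬ A (F ω)) := step_iff hj0 hm0 hEx
  have hmonoΦ : ∀ ω, A ω → Φ ω ≤ Φ (F ω) := by
    intro ω hAω
    apply hφ
    intro i
    have hiJ : i.1 ≠ j0 := by
      intro hcon
      exact (Finset.disjoint_left.1 hIJ) i.2 (hcon ▸ hj0)
    have hmono := (step_forward hj0 hm0 hAω).2.2 i.1 hiJ
    simp only [tournScore_eq]
    exact_mod_cast hmono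
  -- reindexing along the involution
  let e : Equiv.Perm (TournOmega ℓ) := hinv.toPerm
  have he : ∀ ω, e ω = F ω := fun _ => rfl
  have key1 : (∑ ω : TournOmega ℓ, if (B ω ∧ ¬ A ω) then w ω else 0) = Pr w A := by
    unfold Pr
    rw [← Equiv.sum_comp e (fun ω => if (B ω ∧ ¬ A ω) then w ω else 0)]
    apply Finset.sum_congr rfl
    intro ω _
    rw [he ω]
    by_cases h : A ω
    · rw [if_pos ((hiff ω).1 h), if_pos h]
      exact hwC _ _
    · rw [if_neg (fun hc => h ((hiff ω).2 hc)), if_neg h]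
  have key2 : (∑ ω : TournOmega ℓ, if A ω then w ω * Φ ω else 0)
      ≤ (∑ ω : TournOmega ℓ, if (B ω ∧ ¬ A ω) then w ω * Φ ω else 0) := by
    rw [← Equiv.sum_comp e (fun ω => if (B ω ∧ ¬ A ω) then w ω * Φ ω else 0)]
    apply Finset.sum_le_sum
    intro ω _
    rw [he ω]
    by_cases h : A ω
    · rw [if_pos ((hiff ω).1 h), if_pos h]
      rw [hwC (F ω) ω]
      exact mul_le_mul_of_nonneg_left (hmonoΦ ω h) (hw0 ω).le
    · rw [if_neg (fun hc => h ((hiff ω).2 hc)), if_neg h]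
  have split1 : Pr w B
      = Pr w A + ∑ ω : TournOmega ℓ, if (B ω ∧ ¬ A ω) then w ω else 0 := by
    unfold Pr
    rw [← Finset.sum_add_distrib]
    apply Finset.sum_congr rfl
    intro ω _
    by_cases h1 : A ω
    · rw [if_pos (hAB ω h1), if_pos h1, if_neg (fun hc => hc.2 h1), add_zero]
    · by_cases h2 : B ω
      · rw [if_pos h2, if_neg h1, if_pos ⟨h2, h1⟩, zero_add]
      · rw [if_neg h2, if_neg h1, if_neg (fun hc => h2 hc.1), add_zero]
  have split2 : (∑ ω : TournOmega ℓ, if B ω then w ω * Φ ω else 0)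
      = (∑ ω : TournOmega ℓ, if A ω then w ω * Φ ω else 0)
        + (∑ ω : TournOmega ℓ, if (B ω ∧ ¬ A ω) then w ω * Φ ω else 0) := by
    rw [← Finset.sum_add_distrib]
    apply Finset.sum_congr rfl
    intro ω _
    by_cases h1 : A ω
    · rw [if_pos (hAB ω h1), if_pos h1, if_neg (fun hc => hc.2 h1), add_zero]
    · by_cases h2 : B ω
      · rw [if_pos h2, if_neg h1, if_pos ⟨h2, h1⟩, zero_add]
      · rw [if_neg h2, if_neg h1, if_neg (fun hc => h2 hc.1), add_zero]
  have hPrA : 0 < Pr w A := Pr_pos w hw0 hEx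
  have hPrB : Pr w B = 2 * Pr w A := by rw [split1, key1]; ring
  have hNumB : 2 * (∑ ω : TournOmega ℓ, if A ω then w ω * Φ ω else 0)
      ≤ (∑ ω : TournOmega ℓ, if B ω then w ω * Φ ω else 0) := by
    rw [split2]; linarith [key2]
  show CExp w A Φ ≤ CExp w B Φ
  unfold CExp
  rw [div_le_div_iff₀ hPrA (by rw [hPrB]; linarith), hPrB]
  nlinarith [hPrA.le, hNumB]


lemma chain_CExp (I J : Finset (Fin (2 ^ ℓ))) (hIJ : Disjoint I J)
    (φ : ({i : Fin (2 ^ ℓ) // i ∈ I} → ℝ) → ℝ) (hφ : Monotone φ) :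
    ∀ d (M M' : Fin (2 ^ ℓ) → ℕ), (∀ j ∈ J, M j ≤ M' j) →
      (∑ j ∈ J, (M' j - M j)) = d → (∃ ω0, Ev ℓ J M' ω0) →
      CExp (tournUnif ℓ) (Ev ℓ J M') (fun ω => φ fun i => tournScore ℓ ω i.1)
        ≤ CExp (tournUnif ℓ) (Ev ℓ J M) (fun ω => φ fun i => tournScore ℓ ω i.1) := by
  intro d
  induction d with
  | zero =>
    intro M M' hle hs _hEx
    have hiff : ∀ ω, Ev ℓ J M' ω ↔ Ev ℓ J M ω := by
      intro ω
      constructor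
      · exact Ev_mono hle
      · intro h j hj
        have h0 : M' j - M j = 0 := by
          have := (Finset.sum_eq_zero_iff).1 hs j hj
          omega
        have := hle j hj
        have := h j hj
        omega
    exact le_of_eq (CExp_congr _ hiff _)
  | succ d ih =>
    intro M M' hle hs hEx
    have hex0 : ∃ j0 ∈ J, M j0 < M' j0 := by
      by_contra hc
      push_neg at hc
      have h0 : ∑ j ∈ J, (M' j - M j) = 0 :=
        Finset.sum_eq_zero fun j hj => by have := hle j hj; have := hc j hj; omega
      omega
    obtain ⟨j0, hj0J, hj0lt⟩ := hex0
    set M'' := Function.update M j0 (M j0 + 1) with hM''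
    have hle2 : ∀ j ∈ J, M'' j ≤ M' j := by
      intro j hj
      by_cases hjj : j = j0
      · subst hjj; rw [hM'', Function.update_self]; omega
      · rw [hM'', Function.update_of_ne hjj]; exact hle j hj
    have hEx2 : ∃ ω0, Ev ℓ J M'' ω0 := ⟨hEx.choose, Ev_mono hle2 hEx.choose_spec⟩
    have hm0 : M j0 < ℓ := by
      obtain ⟨ω0, h0⟩ := hEx
      have h1 := h0 j0 hj0J
      have h2 := natScore_le ω0 j0.1
      omega
    have hstep := step_CExp hj0J hm0 hEx2 I hIJ φ hφ
    have hsum2 : (∑ j ∈ J, (M' j - M'' j)) = d := by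
      have h1 : (M' j0 - M'' j0) + ∑ j ∈ J.erase j0, (M' j - M'' j)
          = ∑ j ∈ J, (M' j - M'' j) := Finset.add_sum_erase J (fun j => M' j - M'' j) hj0J
      have h2 : (M' j0 - M j0) + ∑ j ∈ J.erase j0, (M' j - M j)
          = ∑ j ∈ J, (M' j - M j) := Finset.add_sum_erase J (fun j => M' j - M j) hj0J
      have h3 : ∑ j ∈ J.erase j0, (M' j - M'' j) = ∑ j ∈ J.erase j0, (M' j - M j) :=
        Finset.sum_congr rfl fun j hj => by
          rw [hM'', Function.update_of_ne (Finset.ne_of_mem_erase hj)]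
      have h4 : M'' j0 = M j0 + 1 := by rw [hM'', Function.update_self]
      omega
    exact le_trans (ih M'' M' hle2 hsum2 hEx) hstep

end KO

/-- in a knockout tournament with `n = 2^ℓ` players (`ℓ ≥ 2`) of equal
strength and the deterministic draw (in round 1 player `2i-1` plays player `2i`, and
in each subsequent round the winners of consecutive pairs of matches of the previous
round play each other), the score vector `S = (S_1,…,S_n)` is negatively right-tail
dependent: `[S_I | S_J > x_J] ≥_st [S_I | S_J > x_J*]` for disjoint `I, J` and
`x_J ≤ x_J*` componentwise with positive-probability conditioning events. -/
theorem knockout_deterministic_draw_scores_NRTD (ℓ : ℕ) (hℓ : 2 ≤ ℓ) :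
    IsNRTD (tournUnif ℓ) (tournScore ℓ) := by
  intro I J hIJ x y hxy _hPx hPy φ hφ _hbdd
  classical
  set Mx : Fin (2 ^ ℓ) → ℕ := fun j => if 0 ≤ x j then ⌊x j⌋₊ + 1 else 0 with hMx
  set My : Fin (2 ^ ℓ) → ℕ := fun j => if 0 ≤ y j then ⌊y j⌋₊ + 1 else 0 with hMy
  have hMxj : ∀ j, Mx j = if 0 ≤ x j then ⌊x j⌋₊ + 1 else 0 := fun _ => rfl
  have hMyj : ∀ j, My j = if 0 ≤ y j then ⌊y j⌋₊ + 1 else 0 := fun _ => rfl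
  have hiffgen : ∀ (z : Fin (2 ^ ℓ) → ℝ) (Mz : Fin (2 ^ ℓ) → ℕ),
      (∀ j, Mz j = if 0 ≤ z j then ⌊z j⌋₊ + 1 else 0) →
      ∀ ω, (∀ j ∈ J, z j < tournScore ℓ ω j) ↔ KO.Ev ℓ J Mz ω := by
    intro z Mz hMz ω
    unfold KO.Ev
    apply forall₂_congr
    intro j _hj
    rw [KO.tournScore_eq, hMz j]
    by_cases h : 0 ≤ z j
    · rw [if_pos h, Nat.add_one_le_iff]
      exact (Nat.floor_lt h).symm
    · rw [if_neg h]
      simp only [Nat.zero_le, iff_true]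
      have h1 : (0:ℝ) ≤ (KO.natScore ℓ ω j.1 : ℝ) := Nat.cast_nonneg _
      have h2 : z j < 0 := not_le.1 h
      linarith
  have hle : ∀ j ∈ J, Mx j ≤ My j := by
    intro j hj
    rw [hMxj j, hMyj j]
    by_cases h : 0 ≤ x j
    · rw [if_pos h, if_pos (le_trans h (hxy j hj))]
      have := Nat.floor_mono (hxy j hj)
      omega
    · rw [if_neg h]
      exact Nat.zero_le _
  have hExy : ∃ ω0, KO.Ev ℓ J My ω0 := by
    obtain ⟨ω0, h0⟩ := KO.exists_of_Pr_pos hPy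
    exact ⟨ω0, (hiffgen y My hMyj ω0).1 h0⟩
  have hchain := KO.chain_CExp I J hIJ φ hφ (∑ j ∈ J, (My j - Mx j)) Mx My hle rfl hExy
  calc CExp (tournUnif ℓ) (fun ω => ∀ j ∈ J, y j < tournScore ℓ ω j)
        (fun ω => φ fun i => tournScore ℓ ω i.1)
      = CExp (tournUnif ℓ) (KO.Ev ℓ J My) (fun ω => φ fun i => tournScore ℓ ω i.1) :=
        KO.CExp_congr _ (hiffgen y My hMyj) _
    _ ≤ CExp (tournUnif ℓ) (KO.Ev ℓ J Mx) (fun ω => φ fun i => tournScore ℓ ω i.1) := hchain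
    _ = CExp (tournUnif ℓ) (fun ω => ∀ j ∈ J, x j < tournScore ℓ ω j)
        (fun ω => φ fun i => tournScore ℓ ω i.1) :=
        (KO.CExp_congr _ (hiffgen x Mx hMxj) _).symm
end
end

section
/- Let X_{12}, X_{13}, X_{23} be independent random variables with X_{12} ~ Bernoulli(1/2) and X_{13}, X_{23} each uniform on {0, 2, 5}. Define S_1 = X_{12} + X_{13}, S_2 = (1 − X_{12}) + X_{23}, S_3 = (5 − X_{13}) + (5 − X_{23}). Then the random vector (S_1, S_2, S_3) is not NRD, not NLTD, and not NRTD. In particular, there exists a bounded coordinatewise increasing symmetric function f: ℝ^2 → ℝ with E[f(S_1,S_2) | S_3 = 5] < E[f(S_1,S_2) | S_3 = 6], E[f(S_1,S_2) | S_3 ≤ 5] < E[f(S_1,S_2) | S_3 ≤ 6], and E[f(S_1,S_2) | S_3 ≥ 5] < E[f(S_1,S_2) | S_3 ≥ 6]. -/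
open scoped Classical
open Finset

noncomputable section

/-- The sample space of the 3-player round-robin example: the first coordinate drives
`X₁₂ ~ Bernoulli(1/2)` and the other two drive `X₁₃, X₂₃`, each uniform on
`{0, 2, 5}`; all three are independent, so each of the 18 outcomes has
probability `1/18`. -/
abbrev RR3Omega := Bool × Fin 3 × Fin 3

def rr3Unif : RR3Omega → ℝ := fun _ => (18 : ℝ)⁻¹

/-- The three possible values `{0, 2, 5}` of `X₁₃` and `X₂₃`. -/
def rr3Val : Fin 3 → ℝ := ![0, 2, 5]

/-- The total scores `S₁ = X₁₂ + X₁₃`, `S₂ = (1 - X₁₂) + X₂₃`,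
`S₃ = (5 - X₁₃) + (5 - X₂₃)`. -/
def rr3Score : RR3Omega → Fin 3 → ℝ := fun ω =>
  ![(if ω.1 then 1 else 0) + rr3Val ω.2.1,
    (if ω.1 then 0 else 1) + rr3Val ω.2.2,
    (5 - rr3Val ω.2.1) + (5 - rr3Val ω.2.2)]


def rr3f : ℝ × ℝ → ℝ := fun p => if 2 ≤ p.1 ∧ 2 ≤ p.2 then 1 else 0

def rr3F : RR3Omega → ℝ := fun ω => rr3f (rr3Score ω 0, rr3Score ω 1)

lemma rr3f_mono : Monotone rr3f := by
  intro p q hpq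
  unfold rr3f
  split_ifs with h1 h2
  · norm_num
  · exact absurd ⟨h1.1.trans hpq.1, h1.2.trans hpq.2⟩ h2
  all_goals norm_num

lemma rr3f_bdd : ∀ p, |rr3f p| ≤ 1 := by
  intro p; unfold rr3f; split_ifs <;> norm_num

lemma rr3_key1 : CExp rr3Unif (fun ω => rr3Score ω 2 = 5) rr3F
    < CExp rr3Unif (fun ω => rr3Score ω 2 = 6) rr3F := by
  simp only [CExp, Pr, rr3F, rr3f, rr3Score, rr3Val, rr3Unif, Fintype.sum_prod_type,
    Fintype.sum_bool, Fin.sum_univ_three, Matrix.cons_val_zero, Matrix.cons_val_one,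
    Matrix.head_cons, Matrix.cons_val_two, Matrix.tail_cons]
  norm_num

lemma rr3_key2 : CExp rr3Unif (fun ω => rr3Score ω 2 ≤ 5) rr3F
    < CExp rr3Unif (fun ω => rr3Score ω 2 ≤ 6) rr3F := by
  simp only [CExp, Pr, rr3F, rr3f, rr3Score, rr3Val, rr3Unif, Fintype.sum_prod_type,
    Fintype.sum_bool, Fin.sum_univ_three, Matrix.cons_val_zero, Matrix.cons_val_one,
    Matrix.head_cons, Matrix.cons_val_two, Matrix.tail_cons]
  norm_num

lemma rr3_key3 : CExp rr3Unif (fun ω => 5 ≤ rr3Score ω 2) rr3F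
    < CExp rr3Unif (fun ω => 6 ≤ rr3Score ω 2) rr3F := by
  simp only [CExp, Pr, rr3F, rr3f, rr3Score, rr3Val, rr3Unif, Fintype.sum_prod_type,
    Fintype.sum_bool, Fin.sum_univ_three, Matrix.cons_val_zero, Matrix.cons_val_one,
    Matrix.head_cons, Matrix.cons_val_two, Matrix.tail_cons]
  norm_num

lemma rr3_pos_eq5 : 0 < Pr rr3Unif (fun ω => rr3Score ω 2 = 5) := by
  simp only [Pr, rr3Score, rr3Val, rr3Unif, Fintype.sum_prod_type,
    Fintype.sum_bool, Fin.sum_univ_three, Matrix.cons_val_two, Matrix.tail_cons,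
    Matrix.head_cons]
  norm_num

lemma rr3_pos_eq6 : 0 < Pr rr3Unif (fun ω => rr3Score ω 2 = 6) := by
  simp only [Pr, rr3Score, rr3Val, rr3Unif, Fintype.sum_prod_type,
    Fintype.sum_bool, Fin.sum_univ_three, Matrix.cons_val_two, Matrix.tail_cons,
    Matrix.head_cons]
  norm_num

lemma rr3_pos_le5 : 0 < Pr rr3Unif (fun ω => rr3Score ω 2 ≤ 5) := by
  simp only [Pr, rr3Score, rr3Val, rr3Unif, Fintype.sum_prod_type,
    Fintype.sum_bool, Fin.sum_univ_three, Matrix.cons_val_two, Matrix.tail_cons,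
    Matrix.head_cons]
  norm_num

lemma rr3_pos_le6 : 0 < Pr rr3Unif (fun ω => rr3Score ω 2 ≤ 6) := by
  simp only [Pr, rr3Score, rr3Val, rr3Unif, Fintype.sum_prod_type,
    Fintype.sum_bool, Fin.sum_univ_three, Matrix.cons_val_two, Matrix.tail_cons,
    Matrix.head_cons]
  norm_num

lemma rr3_pos_ge5 : 0 < Pr rr3Unif (fun ω => (9/2 : ℝ) < rr3Score ω 2) := by
  simp only [Pr, rr3Score, rr3Val, rr3Unif, Fintype.sum_prod_type,
    Fintype.sum_bool, Fin.sum_univ_three, Matrix.cons_val_two, Matrix.tail_cons,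
    Matrix.head_cons]
  norm_num

lemma rr3_pos_ge6 : 0 < Pr rr3Unif (fun ω => (11/2 : ℝ) < rr3Score ω 2) := by
  simp only [Pr, rr3Score, rr3Val, rr3Unif, Fintype.sum_prod_type,
    Fintype.sum_bool, Fin.sum_univ_three, Matrix.cons_val_two, Matrix.tail_cons,
    Matrix.head_cons]
  norm_num

lemma rr3_gt_eq_ge5 :
    (fun ω : RR3Omega => (9/2 : ℝ) < rr3Score ω 2) = fun ω => (5:ℝ) ≤ rr3Score ω 2 := by
  funext ω
  obtain ⟨b, i, j⟩ := ω
  fin_cases i <;> fin_cases j <;>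
    simp only [rr3Score, rr3Val, Matrix.cons_val_two, Matrix.tail_cons,
      Matrix.head_cons, Matrix.cons_val_zero, Matrix.cons_val_one] <;>
    norm_num

lemma rr3_gt_eq_ge6 :
    (fun ω : RR3Omega => (11/2 : ℝ) < rr3Score ω 2) = fun ω => (6:ℝ) ≤ rr3Score ω 2 := by
  funext ω
  obtain ⟨b, i, j⟩ := ω
  fin_cases i <;> fin_cases j <;>
    simp only [rr3Score, rr3Val, Matrix.cons_val_two, Matrix.tail_cons,
      Matrix.head_cons, Matrix.cons_val_zero, Matrix.cons_val_one] <;>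
    norm_num

def rr3phi : ({i : Fin 3 // i ∈ ({0, 1} : Finset (Fin 3))} → ℝ) → ℝ :=
  fun v => rr3f (v ⟨0, by decide⟩, v ⟨1, by decide⟩)

lemma rr3phi_mono : Monotone rr3phi := by
  intro a b hab
  exact rr3f_mono ⟨hab _, hab _⟩

lemma rr3phi_bdd : ∃ C, ∀ v, |rr3phi v| ≤ C := ⟨1, fun v => rr3f_bdd _⟩

/-- in the 3-player constant-sum round-robin tournament with
`X₁₂ ~ Bernoulli(1/2)` and `X₁₃, X₂₃` uniform on `{0,2,5}` (independent), the score
vector `(S₁, S₂, S₃)` is not NRD, not NLTD and not NRTD; in particular there is a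
bounded increasing symmetric `f : ℝ² → ℝ` with
`E[f(S₁,S₂) | S₃ = 5] < E[f(S₁,S₂) | S₃ = 6]`,
`E[f(S₁,S₂) | S₃ ≤ 5] < E[f(S₁,S₂) | S₃ ≤ 6]` and
`E[f(S₁,S₂) | S₃ ≥ 5] < E[f(S₁,S₂) | S₃ ≥ 6]`. -/
theorem roundRobin3_not_NRD_NLTD_NRTD :
    ¬ IsNRD rr3Unif rr3Score ∧ ¬ IsNLTD rr3Unif rr3Score ∧ ¬ IsNRTD rr3Unif rr3Score ∧
    ∃ f : ℝ × ℝ → ℝ, (∃ C, ∀ p, |f p| ≤ C) ∧ Monotone f ∧ (∀ x y, f (x, y) = f (y, x)) ∧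
      CExp rr3Unif (fun ω => rr3Score ω 2 = 5) (fun ω => f (rr3Score ω 0, rr3Score ω 1))
        < CExp rr3Unif (fun ω => rr3Score ω 2 = 6)
            (fun ω => f (rr3Score ω 0, rr3Score ω 1)) ∧
      CExp rr3Unif (fun ω => rr3Score ω 2 ≤ 5) (fun ω => f (rr3Score ω 0, rr3Score ω 1))
        < CExp rr3Unif (fun ω => rr3Score ω 2 ≤ 6)
            (fun ω => f (rr3Score ω 0, rr3Score ω 1)) ∧
      CExp rr3Unif (fun ω => 5 ≤ rr3Score ω 2) (fun ω => f (rr3Score ω 0, rr3Score ω 1))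
        < CExp rr3Unif (fun ω => 6 ≤ rr3Score ω 2)
            (fun ω => f (rr3Score ω 0, rr3Score ω 1)) := by
  have hE5 : (fun ω : RR3Omega => ∀ j ∈ ({2} : Finset (Fin 3)), rr3Score ω j = (fun _ : Fin 3 => (5:ℝ)) j)
      = fun ω => rr3Score ω 2 = 5 := by funext ω; simp
  have hE6 : (fun ω : RR3Omega => ∀ j ∈ ({2} : Finset (Fin 3)), rr3Score ω j = (fun _ : Fin 3 => (6:ℝ)) j)
      = fun ω => rr3Score ω 2 = 6 := by funext ω; simp
  have hL5 : (fun ω : RR3Omega => ∀ j ∈ ({2} : Finset (Fin 3)), rr3Score ω j ≤ (fun _ : Fin 3 => (5:ℝ)) j)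
      = fun ω => rr3Score ω 2 ≤ 5 := by funext ω; simp
  have hL6 : (fun ω : RR3Omega => ∀ j ∈ ({2} : Finset (Fin 3)), rr3Score ω j ≤ (fun _ : Fin 3 => (6:ℝ)) j)
      = fun ω => rr3Score ω 2 ≤ 6 := by funext ω; simp
  have hG5 : (fun ω : RR3Omega => ∀ j ∈ ({2} : Finset (Fin 3)), (fun _ : Fin 3 => (9/2:ℝ)) j < rr3Score ω j)
      = fun ω => (5:ℝ) ≤ rr3Score ω 2 := by
    rw [← rr3_gt_eq_ge5]; funext ω; simp
  have hG6 : (fun ω : RR3Omega => ∀ j ∈ ({2} : Finset (Fin 3)), (fun _ : Fin 3 => (11/2:ℝ)) j < rr3Score ω j)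
      = fun ω => (6:ℝ) ≤ rr3Score ω 2 := by
    rw [← rr3_gt_eq_ge6]; funext ω; simp
  have hφ : (fun ω : RR3Omega => rr3phi fun i => rr3Score ω i.1) = rr3F := rfl
  refine ⟨?_, ?_, ?_, rr3f, ⟨1, rr3f_bdd⟩, rr3f_mono, ?_, rr3_key1, rr3_key2, ?_⟩
  · intro h
    have := h {0, 1} {2} (by decide) (fun _ => 5) (fun _ => 6)
      (fun j _ => by norm_num) (by rw [hE5]; exact rr3_pos_eq5)
      (by rw [hE6]; exact rr3_pos_eq6) rr3phi rr3phi_mono rr3phi_bdd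
    rw [hE5, hE6, hφ] at this
    exact absurd this (not_le.2 rr3_key1)
  · intro h
    have := h {0, 1} {2} (by decide) (fun _ => 5) (fun _ => 6)
      (fun j _ => by norm_num) (by rw [hL5]; exact rr3_pos_le5)
      (by rw [hL6]; exact rr3_pos_le6) rr3phi rr3phi_mono rr3phi_bdd
    rw [hL5, hL6, hφ] at this
    exact absurd this (not_le.2 rr3_key2)
  · intro h
    have := h {0, 1} {2} (by decide) (fun _ => 9/2) (fun _ => 11/2)
      (fun j _ => by norm_num) (by rw [hG5, ← rr3_gt_eq_ge5]; exact rr3_pos_ge5)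
      (by rw [hG6, ← rr3_gt_eq_ge6]; exact rr3_pos_ge6) rr3phi rr3phi_mono rr3phi_bdd
    rw [hG5, hG6, hφ] at this
    exact absurd this (not_le.2 rr3_key3)
  · intro x y
    unfold rr3f
    simp only [and_comm]
  · exact rr3_key3
end
end

section
/- Consider a knockout tournament with n = 2^ℓ players (ℓ ≥ 2) of equal strength and the deterministic draw in which in round 1 player 2i−1 plays player 2i, and in each subsequent round the winners of consecutive pairs of matches of the previous round play each other, all matches being independent fair coin flips; let S_i be the number of matches won by player i. Fix h ∈ {1,…,ℓ}, a nonempty proper subset I of {1,…,n} with 1 ∈ I, and a vector s over I∖{1} such that P(S_1 ≥ h, S_i ≥ s_i for all i ∈ I∖{1}) > 0. Let J = ({1,…,n}∖{1,…,2^h}) ∩ ({1,…,n}∖I). Then the conditional distribution of S_J given {S_1 = h−1, S_i ≥ s_i for all i ∈ I∖{1}} equals the conditional distribution of S_J given {S_1 ≥ h, S_i ≥ s_i for all i ∈ I∖{1}}. -/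
open scoped Classical
open Finset

noncomputable section

namespace KOaux

lemma div_lt_pred (ℓ j t : ℕ) (hj : j < 2^ℓ) (ht : t < ℓ) : j / 2^(t+1) < 2^(ℓ-1) := by
  have h1 : j / 2^(t+1) < 2^(ℓ-(t+1)) := Nat.div_lt_of_lt_mul (by
    rw [← pow_add]
    exact lt_of_lt_of_le hj (Nat.pow_le_pow_right (by norm_num) (by omega)))
  exact lt_of_lt_of_le h1 (Nat.pow_le_pow_right (by norm_num) (by omega))

/-- Player `j`'s path condition: `j` wins its first `r` matches. -/
def pcond (ℓ j : ℕ) (ω : TournOmega ℓ) (r : ℕ) : Prop :=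
  ∀ t, t < r → ∀ (ht : t < ℓ) (hb : j / 2^(t+1) < 2^(ℓ-1)),
    ω ⟨t, ht⟩ ⟨j / 2^(t+1), hb⟩ = decide (j / 2^t % 2 = 0)

lemma pcond_mono {ℓ j : ℕ} {ω : TournOmega ℓ} {m r : ℕ} (hmr : m ≤ r)
    (hp : pcond ℓ j ω r) : pcond ℓ j ω m :=
  fun t ht => hp t (lt_of_lt_of_le ht hmr)

lemma pcond_zero {ℓ j : ℕ} {ω : TournOmega ℓ} : pcond ℓ j ω 0 := by
  intro t ht; omega

lemma pcond_succ_iff {ℓ j r : ℕ} {ω : TournOmega ℓ} (hr : r < ℓ)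
    (hb : j / 2^(r+1) < 2^(ℓ-1)) :
    pcond ℓ j ω (r+1) ↔ pcond ℓ j ω r ∧
      ω ⟨r, hr⟩ ⟨j / 2^(r+1), hb⟩ = decide (j / 2^r % 2 = 0) := by
  constructor
  · intro hp
    exact ⟨pcond_mono (Nat.le_succ r) hp, hp r (Nat.lt_succ_self r) hr hb⟩
  · rintro ⟨hp, hbit⟩ t htr ht hbt
    rcases Nat.lt_succ_iff_lt_or_eq.mp htr with h' | h'
    · exact hp t h' ht hbt
    · subst h'; exact hbit

lemma tournWinner_range (ℓ : ℕ) (ω : TournOmega ℓ) :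
    ∀ r, r ≤ ℓ → ∀ b, b < 2^(ℓ - r) →
      b * 2^r ≤ tournWinner ℓ ω r b ∧ tournWinner ℓ ω r b < (b+1) * 2^r := by
  intro r
  induction r with
  | zero => intro _ b hb; simp [tournWinner]
  | succ r ih =>
    intro hr b hb
    have hrl : r < ℓ := by omega
    have hb1 : b < 2^(ℓ-1) := lt_of_lt_of_le hb (Nat.pow_le_pow_right (by norm_num) (by omega))
    have hpow : 2^(ℓ - r) = 2 * 2^(ℓ - (r+1)) := by
      rw [← pow_succ']; congr 1; omega
    have hbb : 2*b+1 < 2^(ℓ-r) := by omega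
    have e1 : (2:ℕ)^(r+1) = 2^r * 2 := pow_succ 2 r
    rw [tournWinner, dif_pos ⟨hrl, hb1⟩]
    cases hω : ω ⟨r, hrl⟩ ⟨b, hb1⟩
    · simp only [if_neg Bool.false_ne_true]
      obtain ⟨l1, l2⟩ := ih (by omega) (2*b+1) hbb
      constructor
      · calc b * 2^(r+1) = (2*b) * 2^r := by rw [e1]; ring
          _ ≤ (2*b+1) * 2^r := Nat.mul_le_mul_right _ (by omega)
          _ ≤ _ := l1
      · calc tournWinner ℓ ω r (2*b+1) < (2*b+1+1) * 2^r := l2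
          _ = (b+1) * 2^(r+1) := by rw [e1]; ring
    · simp only [if_pos rfl]
      obtain ⟨l1, l2⟩ := ih (by omega) (2*b) (by omega)
      constructor
      · calc b * 2^(r+1) = (2*b) * 2^r := by rw [e1]; ring
          _ ≤ _ := l1
      · calc tournWinner ℓ ω r (2*b) < (2*b+1) * 2^r := l2
          _ ≤ (2*b+2) * 2^r := Nat.mul_le_mul_right _ (by omega)
          _ = (b+1) * 2^(r+1) := by rw [e1]; ring


lemma tournWinner_eq_iff (ℓ : ℕ) (ω : TournOmega ℓ) (j : ℕ) (hj : j < 2^ℓ) :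
    ∀ r, r ≤ ℓ → (tournWinner ℓ ω r (j / 2^r) = j ↔ pcond ℓ j ω r) := by
  intro r
  induction r with
  | zero =>
    intro _
    simp [tournWinner, pcond]
  | succ r ih =>
    intro hr
    have hrl : r < ℓ := by omega
    have hqmod := Nat.div_add_mod (j / 2^r) 2
    have hq : j / 2^(r+1) = j / 2^r / 2 := by
      rw [Nat.div_div_eq_div_mul, ← pow_succ]
    have hqℓ : j / 2^(r+1) < 2^(ℓ-(r+1)) := Nat.div_lt_of_lt_mul (by
      rw [← pow_add]
      exact lt_of_lt_of_le hj (Nat.pow_le_pow_right (by norm_num) (by omega)))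
    have hpow : 2^(ℓ - r) = 2 * 2^(ℓ - (r+1)) := by
      rw [← pow_succ']; congr 1; omega
    have hb : j / 2^(r+1) < 2^(ℓ-1) := div_lt_pred ℓ j r hj hrl
    have hjlow : (j / 2^r) * 2^r ≤ j := Nat.div_mul_le_self _ _
    have hjhigh : j < (j / 2^r + 1) * 2^r := by
      have h1 := Nat.mod_lt j (show 0 < 2^r by positivity)
      have h2 := Nat.div_add_mod j (2^r)
      nlinarith [h1, h2]
    have hmod2 : j / 2^r % 2 = 0 ∨ j / 2^r % 2 = 1 := Nat.mod_two_eq_zero_or_one _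
    rw [tournWinner, dif_pos ⟨hrl, hb⟩, pcond_succ_iff hrl hb]
    cases hω : ω ⟨r, hrl⟩ ⟨j / 2^(r+1), hb⟩
    · simp only [Bool.false_eq_true, if_false]
      rcases hmod2 with hm | hm
      · -- parity 0 : both sides False
        rw [hm]
        simp only [show decide ((0:ℕ) = 0) = true from rfl]
        constructor
        · intro hwin
          exfalso
          have hbound : 2*(j / 2^(r+1)) + 1 < 2^(ℓ-r) := by omega
          obtain ⟨l1, -⟩ := tournWinner_range ℓ ω r (by omega) (2*(j / 2^(r+1)) + 1) hbound
          rw [hwin] at l1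
          rw [show 2 * (j / 2^(r+1)) + 1 = j / 2^r + 1 by omega] at l1
          omega
        · rintro ⟨-, hbit⟩
          exact absurd hbit (by simp)
      · have hup : 2 * (j / 2^(r+1)) + 1 = j / 2^r := by omega
        rw [hup, ih (by omega), hm]
        simp
    · simp only [eq_self_iff_true, if_true]
      rcases hmod2 with hm | hm
      · have hup : 2 * (j / 2^(r+1)) = j / 2^r := by omega
        rw [hup, ih (by omega), hm]
        simp
      · rw [hm]
        simp only [show decide ((1:ℕ) = 0) = false from rfl]
        constructor
        · intro hwin
          exfalso
          have hbound : 2*(j / 2^(r+1)) < 2^(ℓ-r) := by omega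
          obtain ⟨-, l2⟩ := tournWinner_range ℓ ω r (by omega) (2*(j / 2^(r+1))) hbound
          rw [hwin] at l2
          rw [show 2 * (j / 2^(r+1)) + 1 = j / 2^r by omega] at l2
          omega
        · rintro ⟨-, hbit⟩
          exact absurd hbit (by simp)


/-- Number of rounds won among the first `n` rounds. -/
def kcard (ℓ : ℕ) (j : ℕ) (ω : TournOmega ℓ) (n : ℕ) : ℕ :=
  (((Finset.Icc 1 n)).filter (fun r => pcond ℓ j ω r)).card

lemma tournScore_eq_kcard (ℓ : ℕ) (ω : TournOmega ℓ) (i : Fin (2^ℓ)) :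
    tournScore ℓ ω i = (kcard ℓ i.1 ω ℓ : ℝ) := by
  unfold tournScore kcard
  congr 2
  apply Finset.filter_congr
  intro r hr
  simp only [Finset.mem_Icc] at hr
  exact tournWinner_eq_iff ℓ ω i.1 i.2 r hr.2

lemma kcard_le_iff (ℓ j n m : ℕ) (ω : TournOmega ℓ) (hm : m ≤ n) :
    m ≤ kcard ℓ j ω n ↔ pcond ℓ j ω m := by
  constructor
  · intro hle
    by_contra hPm
    have hsub : ((Finset.Icc 1 n)).filter (fun r => pcond ℓ j ω r) ⊆ Finset.Icc 1 (m-1) := by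
      intro r hr
      simp only [Finset.mem_filter, Finset.mem_Icc] at *
      refine ⟨hr.1.1, ?_⟩
      by_contra hrm
      exact hPm (pcond_mono (by omega) hr.2)
    have := Finset.card_le_card hsub
    rw [Nat.card_Icc] at this
    unfold kcard at hle
    have hm0 : m ≠ 0 := by
      intro h0; subst h0; exact hPm pcond_zero
    omega
  · intro hPm
    have hsub : Finset.Icc 1 m ⊆ ((Finset.Icc 1 n)).filter (fun r => pcond ℓ j ω r) := by
      intro r hr
      simp only [Finset.mem_filter, Finset.mem_Icc] at *
      exact ⟨⟨hr.1, le_trans hr.2 hm⟩, pcond_mono hr.2 hPm⟩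
    have := Finset.card_le_card hsub
    rw [Nat.card_Icc] at this
    unfold kcard
    omega

lemma kcard_min (ℓ j n n' : ℕ) (ω : TournOmega ℓ) (hn : n' ≤ n) :
    kcard ℓ j ω n' = min (kcard ℓ j ω n) n' := by
  have h1 : kcard ℓ j ω n' ≤ n' := by
    have : ((Finset.Icc 1 n')).filter (fun r => pcond ℓ j ω r) ⊆ Finset.Icc 1 n' :=
      Finset.filter_subset _ _
    have := Finset.card_le_card this
    rw [Nat.card_Icc] at this
    unfold kcard; omega
  apply le_antisymm
  · apply le_min _ h1
    have := (kcard_le_iff ℓ j n' (kcard ℓ j ω n') ω h1).mp le_rfl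
    exact (kcard_le_iff ℓ j n (kcard ℓ j ω n') ω (le_trans h1 hn)).mpr this
  · have hmn : min (kcard ℓ j ω n) n ≤ n := min_le_right _ _
    have hp : pcond ℓ j ω (min (kcard ℓ j ω n) n') :=
      (kcard_le_iff ℓ j n _ ω (le_trans (min_le_right _ _) hn)).mp (min_le_left _ _)
    exact (kcard_le_iff ℓ j n' _ ω (min_le_right _ _)).mpr hp

/-- The match outcomes of the first `h` rounds within the block of players `0,…,2^h-1`. -/
def inB (ℓ hh : ℕ) (t : Fin ℓ) (b : Fin (2^(ℓ-1))) : Prop :=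
  t.1 < hh ∧ b.1 < 2^(hh - 1 - t.1)

/-- Merge two outcome configurations: block coordinates from `a`, the rest from `b`. -/
def mrg (ℓ hh : ℕ) (a b : TournOmega ℓ) : TournOmega ℓ :=
  fun t c => if inB ℓ hh t c then a t c else b t c

lemma mrg_mrg (ℓ hh : ℕ) (a b : TournOmega ℓ) :
    mrg ℓ hh (mrg ℓ hh a b) (mrg ℓ hh b a) = a := by
  funext t c
  unfold mrg
  by_cases hc : inB ℓ hh t c <;> simp [hc]

/-- The splitting involution on pairs of configurations. -/
def mrgEquiv (ℓ hh : ℕ) : (TournOmega ℓ × TournOmega ℓ) ≃ (TournOmega ℓ × TournOmega ℓ) where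
  toFun p := (mrg ℓ hh p.1 p.2, mrg ℓ hh p.2 p.1)
  invFun p := (mrg ℓ hh p.1 p.2, mrg ℓ hh p.2 p.1)
  left_inv p := by simp [mrg_mrg]
  right_inv p := by simp [mrg_mrg]

/-- Product formula for a block-measurable function times a complement-measurable one. -/
lemma sum_mul_of_meas (ℓ hh : ℕ) (F G : TournOmega ℓ → ℝ)
    (hF : ∀ a b, F (mrg ℓ hh a b) = F a) (hG : ∀ a b, G (mrg ℓ hh a b) = G b) :
    (Fintype.card (TournOmega ℓ) : ℝ) * ∑ ω, F ω * G ω = (∑ ω, F ω) * (∑ ω, G ω) := by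
  have h1 : (∑ ω, F ω) * (∑ ω, G ω) = ∑ p : TournOmega ℓ × TournOmega ℓ, F p.1 * G p.2 := by
    rw [Fintype.sum_prod_type, Finset.sum_mul]
    apply Finset.sum_congr rfl
    intro a _
    rw [Finset.mul_sum]
  rw [h1, ← Equiv.sum_comp (mrgEquiv ℓ hh) (fun p => F p.1 * G p.2)]
  have h2 : ∀ p : TournOmega ℓ × TournOmega ℓ,
      F ((mrgEquiv ℓ hh) p).1 * G ((mrgEquiv ℓ hh) p).2 = F p.1 * G p.1 := by
    intro p
    show F (mrg ℓ hh p.1 p.2) * G (mrg ℓ hh p.2 p.1) = _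
    rw [hF, hG]
  rw [Finset.sum_congr rfl (fun p _ => h2 p)]
  rw [Fintype.sum_prod_type, Finset.mul_sum]
  apply Finset.sum_congr rfl
  intro a _
  have e : ∑ y : TournOmega ℓ, F (a, y).1 * G (a, y).1 = ∑ _y : TournOmega ℓ, F a * G a :=
    Finset.sum_congr rfl fun y _ => rfl
  rw [e, Finset.sum_const, nsmul_eq_mul, Finset.card_univ]

/-- Coordinates on a player `j ≥ 2^h`'s path are outside the block coordinates. -/
lemma pcond_mrg_out (ℓ hh : ℕ) (j : ℕ) (hj : 2^hh ≤ j) (a b : TournOmega ℓ) (r : ℕ) :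
    pcond ℓ j (mrg ℓ hh a b) r ↔ pcond ℓ j b r := by
  have key : ∀ (t : ℕ) (ht : t < ℓ) (hb : j / 2^(t+1) < 2^(ℓ-1)),
      mrg ℓ hh a b ⟨t, ht⟩ ⟨j / 2^(t+1), hb⟩ = b ⟨t, ht⟩ ⟨j / 2^(t+1), hb⟩ := by
    intro t ht hb
    unfold mrg
    rw [if_neg]
    rintro ⟨h1, h2⟩
    have h1' : t < hh := h1
    have h2' : j / 2^(t+1) < 2^(hh - 1 - t) := h2
    have hge : 2^(hh-1-t) ≤ j / 2^(t+1) := by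
      rw [Nat.le_div_iff_mul_le (by positivity), ← pow_add]
      refine le_trans (Nat.pow_le_pow_right (by norm_num) (by omega)) hj
    omega
  constructor <;> intro hp t htr ht hb
  · rw [← key t ht hb]; exact hp t htr ht hb
  · rw [key t ht hb]; exact hp t htr ht hb

/-- Coordinates on a player `j < 2^h`'s path during the first `h` rounds are block coordinates. -/
lemma pcond_mrg_in (ℓ hh : ℕ) (j : ℕ) (hj : j < 2^hh) (a b : TournOmega ℓ) (r : ℕ)
    (hr : r ≤ hh) : pcond ℓ j (mrg ℓ hh a b) r ↔ pcond ℓ j a r := by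
  have key : ∀ (t : ℕ), t < r → ∀ (ht : t < ℓ) (hb : j / 2^(t+1) < 2^(ℓ-1)),
      mrg ℓ hh a b ⟨t, ht⟩ ⟨j / 2^(t+1), hb⟩ = a ⟨t, ht⟩ ⟨j / 2^(t+1), hb⟩ := by
    intro t htr ht hb
    unfold mrg
    rw [if_pos]
    have ht' : t < hh := by omega
    refine ⟨ht', ?_⟩
    show j / 2^(t+1) < 2^(hh-1-t)
    apply Nat.div_lt_of_lt_mul
    rw [← pow_add]
    refine lt_of_lt_of_le hj (Nat.pow_le_pow_right (by norm_num) (by omega))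
  constructor <;> intro hp t htr ht hb
  · rw [← key t htr ht hb]; exact hp t htr ht hb
  · rw [key t htr ht hb]; exact hp t htr ht hb
/-- If player `0` wins its first `h` matches, no other player in the block does. -/
lemma pcond_conflict (ℓ hh : ℕ) (hhl : hh ≤ ℓ) (j : ℕ) (hne : j ≠ 0) (hlt : j < 2^hh)
    (ω : TournOmega ℓ) (h0 : pcond ℓ 0 ω hh) : ¬ pcond ℓ j ω hh := by
  intro hpj
  set t := Nat.log 2 j with htdef
  have h1 : 2^t ≤ j := Nat.pow_log_le_self 2 hne
  have h2 : j < 2^(t+1) := Nat.lt_pow_succ_log_self (by norm_num) j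
  have hth : t < hh := by
    by_contra hc
    have : 2^hh ≤ 2^t := Nat.pow_le_pow_right (by norm_num) (by omega)
    omega
  have htl : t < ℓ := by omega
  have hd0 : j / 2^(t+1) = 0 := Nat.div_eq_of_lt h2
  have hd1 : j / 2^t = 1 := by
    have hp : 0 < 2^t := by positivity
    have := Nat.div_le_div_right (c := 2^t) h1
    rw [Nat.div_self hp] at this
    have h2' : j / 2^t < 2 := by
      apply Nat.div_lt_of_lt_mul
      rw [pow_succ] at h2
      omega
    omega
  have hb : j / 2^(t+1) < 2^(ℓ-1) := by rw [hd0]; positivity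
  have hb0 : (0:ℕ) / 2^(t+1) < 2^(ℓ-1) := by
    rw [Nat.zero_div]; positivity
  have e1 := hpj t hth htl hb
  have e0 := h0 t hth htl hb0
  rw [hd1] at e1
  rw [show ((⟨j / 2^(t+1), hb⟩ : Fin (2^(ℓ-1)))) = ⟨(0:ℕ) / 2^(t+1), hb0⟩ from
    Fin.ext (by simp [hd0])] at e1
  rw [e0] at e1
  simp at e1

/-- Flip the decisive bit: round `h`, block `0`. -/
def flipBit (ℓ hh : ℕ) (ω : TournOmega ℓ) : TournOmega ℓ :=
  fun t b => if t.1 = hh - 1 ∧ b.1 = 0 then false else ω t b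

lemma pcond_flipBit (ℓ hh : ℕ) (j : ℕ) (ω : TournOmega ℓ) (r : ℕ) (hr : r ≤ hh - 1) :
    pcond ℓ j (flipBit ℓ hh ω) r ↔ pcond ℓ j ω r := by
  have key : ∀ (t : ℕ), t < r → ∀ (ht : t < ℓ) (hb : j / 2^(t+1) < 2^(ℓ-1)),
      flipBit ℓ hh ω ⟨t, ht⟩ ⟨j / 2^(t+1), hb⟩ = ω ⟨t, ht⟩ ⟨j / 2^(t+1), hb⟩ := by
    intro t htr ht hb
    unfold flipBit
    rw [if_neg]
    rintro ⟨c1, -⟩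
    have : t = hh - 1 := c1
    omega
  constructor <;> intro hp t htr ht hb
  · rw [← key t htr ht hb]; exact hp t htr ht hb
  · rw [key t htr ht hb]; exact hp t htr ht hb

lemma not_pcond_flipBit_zero (ℓ hh : ℕ) (hh1 : 1 ≤ hh) (hhl : hh ≤ ℓ) (ω : TournOmega ℓ) :
    ¬ pcond ℓ 0 (flipBit ℓ hh ω) hh := by
  intro hp
  have htl : hh - 1 < ℓ := by omega
  have hb : (0:ℕ) / 2^(hh-1+1) < 2^(ℓ-1) := by rw [Nat.zero_div]; positivity
  have := hp (hh-1) (by omega) htl hb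
  unfold flipBit at this
  rw [if_pos ⟨rfl, by simp⟩] at this
  simp at this

lemma exists_of_Pr_pos {Ω : Type*} [Fintype Ω] {w : Ω → ℝ} {A : Ω → Prop}
    (hpos : 0 < Pr w A) : ∃ ω, A ω := by
  by_contra hc
  push_neg at hc
  have : Pr w A = 0 := by
    unfold Pr
    apply Finset.sum_eq_zero
    intro ω _
    rw [if_neg (hc ω)]
  linarith
lemma kcard_mrg_in (ℓ hh j n : ℕ) (hj : j < 2^hh) (hn : n ≤ hh) (a b : TournOmega ℓ) :
    kcard ℓ j (mrg ℓ hh a b) n = kcard ℓ j a n := by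
  unfold kcard
  congr 1
  apply Finset.filter_congr
  intro r hr
  simp only [Finset.mem_Icc] at hr
  exact pcond_mrg_in ℓ hh j hj a b r (le_trans hr.2 hn)

lemma kcard_mrg_out (ℓ hh j n : ℕ) (hj : 2^hh ≤ j) (a b : TournOmega ℓ) :
    kcard ℓ j (mrg ℓ hh a b) n = kcard ℓ j b n := by
  unfold kcard
  congr 1
  apply Finset.filter_congr
  intro r _
  exact pcond_mrg_out ℓ hh j hj a b r

lemma kcard_flipBit (ℓ hh j : ℕ) (ω : TournOmega ℓ) :
    kcard ℓ j (flipBit ℓ hh ω) (hh-1) = kcard ℓ j ω (hh-1) := by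
  unfold kcard
  congr 1
  apply Finset.filter_congr
  intro r hr
  simp only [Finset.mem_Icc] at hr
  exact pcond_flipBit ℓ hh j ω r hr.2

lemma tournScore_mrg_out (ℓ hh : ℕ) (i : Fin (2^ℓ)) (hj : 2^hh ≤ i.1)
    (a b : TournOmega ℓ) : tournScore ℓ (mrg ℓ hh a b) i = tournScore ℓ b i := by
  rw [tournScore_eq_kcard, tournScore_eq_kcard, kcard_mrg_out ℓ hh i.1 ℓ hj]

lemma CExp_congr {Ω : Type*} [Fintype Ω] (w : Ω → ℝ) (A A' : Ω → Prop) (F : Ω → ℝ)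
    (hiff : ∀ ω, A ω ↔ A' ω) : CExp w A F = CExp w A' F := by
  unfold CExp Pr
  congr 1
  · exact Finset.sum_congr rfl fun ω _ => by rw [if_congr (hiff ω) rfl rfl]
  · exact Finset.sum_congr rfl fun ω _ => by rw [if_congr (hiff ω) rfl rfl]

/-- Main factorization: the conditional expectation of an outside-measurable function
given an event of the form (block event) ∧ (outside event) does not depend on the
block event. -/
lemma cexp_factor (ℓ hh : ℕ) (P Q : TournOmega ℓ → Prop) (f' : TournOmega ℓ → ℝ)
    (hP : ∀ a b, P (mrg ℓ hh a b) ↔ P a)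
    (hQ : ∀ a b, Q (mrg ℓ hh a b) ↔ Q b)
    (hf : ∀ a b, f' (mrg ℓ hh a b) = f' b)
    (hex : ∃ ω, P ω) :
    CExp (tournUnif ℓ) (fun ω => P ω ∧ Q ω) f'
      = (∑ ω, if Q ω then f' ω else 0) / (∑ ω, if Q ω then (1:ℝ) else 0) := by
  obtain ⟨ω₀, hP0⟩ := hex
  set N : ℝ := (Fintype.card (TournOmega ℓ) : ℝ) with hNdef
  have hN0 : 0 < N := by
    rw [hNdef]
    exact_mod_cast Fintype.card_pos
  set F : TournOmega ℓ → ℝ := fun ω => if P ω then 1 else 0 with hF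
  set Gf : TournOmega ℓ → ℝ := fun ω => if Q ω then f' ω else 0 with hGf
  set G1 : TournOmega ℓ → ℝ := fun ω => if Q ω then (1:ℝ) else 0 with hG1
  have hFm : ∀ a b, F (mrg ℓ hh a b) = F a := fun a b => if_congr (hP a b) rfl rfl
  have hGfm : ∀ a b, Gf (mrg ℓ hh a b) = Gf b := fun a b => by
    show (if Q (mrg ℓ hh a b) then f' (mrg ℓ hh a b) else 0) = _
    rw [hf a b]
    exact if_congr (hQ a b) rfl rfl
  have hG1m : ∀ a b, G1 (mrg ℓ hh a b) = G1 b := fun a b => if_congr (hQ a b) rfl rfl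
  have e1 := sum_mul_of_meas ℓ hh F Gf hFm hGfm
  have e2 := sum_mul_of_meas ℓ hh F G1 hFm hG1m
  have hFpos : 0 < ∑ ω, F ω := by
    calc (0:ℝ) < 1 := one_pos
      _ = F ω₀ := by rw [hF]; simp only [if_pos hP0]
      _ ≤ ∑ ω, F ω := Finset.single_le_sum
          (fun ω _ => by rw [hF]; dsimp only; split <;> norm_num) (Finset.mem_univ ω₀)
  have hunif : ∀ ω : TournOmega ℓ, tournUnif ℓ ω = N⁻¹ := fun ω => rfl
  have hnum : ∑ ω, (if P ω ∧ Q ω then tournUnif ℓ ω * f' ω else 0)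
      = N⁻¹ * ∑ ω, F ω * Gf ω := by
    rw [Finset.mul_sum]
    apply Finset.sum_congr rfl
    intro ω _
    rw [hunif ω, hF, hGf]
    by_cases h1 : P ω
    · by_cases h2 : Q ω
      · rw [if_pos ⟨h1, h2⟩]; dsimp only; rw [if_pos h1, if_pos h2]; ring
      · rw [if_neg (fun hc => h2 hc.2)]; dsimp only; rw [if_pos h1, if_neg h2]; ring
    · rw [if_neg (fun hc => h1 hc.1)]; dsimp only; rw [if_neg h1]; ring
  have hden : ∑ ω, (if P ω ∧ Q ω then tournUnif ℓ ω else 0)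
      = N⁻¹ * ∑ ω, F ω * G1 ω := by
    rw [Finset.mul_sum]
    apply Finset.sum_congr rfl
    intro ω _
    rw [hunif ω, hF, hG1]
    by_cases h1 : P ω
    · by_cases h2 : Q ω
      · rw [if_pos ⟨h1, h2⟩]; dsimp only; rw [if_pos h1, if_pos h2]; ring
      · rw [if_neg (fun hc => h2 hc.2)]; dsimp only; rw [if_pos h1, if_neg h2]; ring
    · rw [if_neg (fun hc => h1 hc.1)]; dsimp only; rw [if_neg h1]; ring
  have hgoal : CExp (tournUnif ℓ) (fun ω => P ω ∧ Q ω) f'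
      = (∑ ω, (if P ω ∧ Q ω then tournUnif ℓ ω * f' ω else 0))
        / (∑ ω, (if P ω ∧ Q ω then tournUnif ℓ ω else 0)) := by
    unfold CExp Pr
    congr 1 <;> refine Finset.sum_congr rfl (fun ω _ => ?_) <;> by_cases hc : P ω ∧ Q ω
    · rw [if_pos hc, if_pos hc]
    · rw [if_neg hc, if_neg hc]
    · rw [if_pos hc, if_pos hc]
    · rw [if_neg hc, if_neg hc]
  rw [hgoal, hnum, hden]
  have hs1 : ∑ ω, F ω * Gf ω = (∑ ω, F ω) * (∑ ω, Gf ω) / N := by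
    rw [eq_div_iff (ne_of_gt hN0)]
    linarith [e1]
  have hs2 : ∑ ω, F ω * G1 ω = (∑ ω, F ω) * (∑ ω, G1 ω) / N := by
    rw [eq_div_iff (ne_of_gt hN0)]
    linarith [e2]
  rw [hs1, hs2]
  have hc0 : (∑ ω, F ω) * N⁻¹ / N ≠ 0 :=
    ne_of_gt (div_pos (mul_pos hFpos (inv_pos.mpr hN0)) hN0)
  calc N⁻¹ * ((∑ ω, F ω) * (∑ ω, Gf ω) / N) / (N⁻¹ * ((∑ ω, F ω) * (∑ ω, G1 ω) / N))
      = ((∑ ω, F ω) * N⁻¹ / N) * (∑ ω, Gf ω) / (((∑ ω, F ω) * N⁻¹ / N) * (∑ ω, G1 ω)) := by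
        ring_nf
    _ = (∑ ω, Gf ω) / (∑ ω, G1 ω) := mul_div_mul_left _ _ hc0
/-- Constraints on block players, in block-measurable form. -/
def CinP (ℓ hh : ℕ) (I : Finset (Fin (2^ℓ))) (s : Fin (2^ℓ) → ℝ) (ω : TournOmega ℓ) : Prop :=
  ∀ i ∈ I, i.1 ≠ 0 → i.1 < 2^hh → s i ≤ (kcard ℓ i.1 ω (hh-1) : ℝ)

/-- Constraints on outside players. -/
def CoutP (ℓ hh : ℕ) (I : Finset (Fin (2^ℓ))) (s : Fin (2^ℓ) → ℝ) (ω : TournOmega ℓ) : Prop :=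
  ∀ i ∈ I, 2^hh ≤ i.1 → s i ≤ tournScore ℓ ω i

/-- Block part of the event `{S₀ = h-1}` with constraints. -/
def P1P (ℓ hh : ℕ) (I : Finset (Fin (2^ℓ))) (s : Fin (2^ℓ) → ℝ) (ω : TournOmega ℓ) : Prop :=
  (pcond ℓ 0 ω (hh-1) ∧ ¬ pcond ℓ 0 ω hh) ∧ CinP ℓ hh I s ω

/-- Block part of the event `{S₀ ≥ h}` with constraints. -/
def P2P (ℓ hh : ℕ) (I : Finset (Fin (2^ℓ))) (s : Fin (2^ℓ) → ℝ) (ω : TournOmega ℓ) : Prop :=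
  pcond ℓ 0 ω hh ∧ CinP ℓ hh I s ω

lemma CinP_mrg (ℓ hh : ℕ) (I : Finset (Fin (2^ℓ))) (s : Fin (2^ℓ) → ℝ)
    (a b : TournOmega ℓ) : CinP ℓ hh I s (mrg ℓ hh a b) ↔ CinP ℓ hh I s a := by
  unfold CinP
  constructor <;> intro hp i hi hne hlt
  · rw [← kcard_mrg_in ℓ hh i.1 (hh-1) hlt (by omega) a b]
    exact hp i hi hne hlt
  · rw [kcard_mrg_in ℓ hh i.1 (hh-1) hlt (by omega) a b]
    exact hp i hi hne hlt

lemma CoutP_mrg (ℓ hh : ℕ) (I : Finset (Fin (2^ℓ))) (s : Fin (2^ℓ) → ℝ)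
    (a b : TournOmega ℓ) : CoutP ℓ hh I s (mrg ℓ hh a b) ↔ CoutP ℓ hh I s b := by
  unfold CoutP
  constructor <;> intro hp i hi hge
  · rw [← tournScore_mrg_out ℓ hh i hge a b]
    exact hp i hi hge
  · rw [tournScore_mrg_out ℓ hh i hge a b]
    exact hp i hi hge

lemma P1P_mrg (ℓ hh : ℕ) (I : Finset (Fin (2^ℓ))) (s : Fin (2^ℓ) → ℝ)
    (a b : TournOmega ℓ) : P1P ℓ hh I s (mrg ℓ hh a b) ↔ P1P ℓ hh I s a := by
  unfold P1P
  rw [pcond_mrg_in ℓ hh 0 (by positivity) a b (hh-1) (by omega),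
      pcond_mrg_in ℓ hh 0 (by positivity) a b hh le_rfl]
  exact and_congr Iff.rfl (CinP_mrg ℓ hh I s a b)

lemma P2P_mrg (ℓ hh : ℕ) (I : Finset (Fin (2^ℓ))) (s : Fin (2^ℓ) → ℝ)
    (a b : TournOmega ℓ) : P2P ℓ hh I s (mrg ℓ hh a b) ↔ P2P ℓ hh I s a := by
  unfold P2P
  rw [pcond_mrg_in ℓ hh 0 (by positivity) a b hh le_rfl]
  exact and_congr Iff.rfl (CinP_mrg ℓ hh I s a b)

lemma CinP_flip (ℓ hh : ℕ) (I : Finset (Fin (2^ℓ))) (s : Fin (2^ℓ) → ℝ)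
    (ω : TournOmega ℓ) : CinP ℓ hh I s (flipBit ℓ hh ω) ↔ CinP ℓ hh I s ω := by
  unfold CinP
  constructor <;> intro hp i hi hne hlt
  · rw [← kcard_flipBit ℓ hh i.1 ω]
    exact hp i hi hne hlt
  · rw [kcard_flipBit ℓ hh i.1 ω]
    exact hp i hi hne hlt
end KOaux

open KOaux in
/-- in the knockout tournament with `n = 2^ℓ` players (`ℓ ≥ 2`) of equal
strength and deterministic draw, fix `h ∈ {1,…,ℓ}`, a nonempty proper subset `I` of
the players containing player 1 (index `0`), and a vector `s` over `I∖{1}` such that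
`P(S_1 ≥ h, S_i ≥ s_i ∀ i ∈ I∖{1}) > 0`.  With
`J = ({1,…,n}∖{1,…,2^h}) ∩ Iᶜ`, the conditional distribution of `S_J` given
`{S_1 = h-1, S_i ≥ s_i ∀ i ∈ I∖{1}}` equals that given
`{S_1 ≥ h, S_i ≥ s_i ∀ i ∈ I∖{1}}` (equality of all conditional expectations). -/
theorem knockout_outside_block_conditional_law_eq (ℓ : ℕ) (hℓ : 2 ≤ ℓ)
    (h : ℕ) (hh1 : 1 ≤ h) (hhℓ : h ≤ ℓ)
    (I : Finset (Fin (2 ^ ℓ))) (hIne : I.Nonempty) (hIproper : I ≠ Finset.univ)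
    (h1I : (⟨0, by positivity⟩ : Fin (2 ^ ℓ)) ∈ I)
    (s : Fin (2 ^ ℓ) → ℝ)
    (hpos : 0 < Pr (tournUnif ℓ) fun ω =>
      (h : ℝ) ≤ tournScore ℓ ω ⟨0, by positivity⟩ ∧
      ∀ i ∈ I, i.1 ≠ 0 → s i ≤ tournScore ℓ ω i) :
    ∀ f : ({j : Fin (2 ^ ℓ) //
        j ∈ (Finset.univ.filter fun j : Fin (2 ^ ℓ) => 2 ^ h ≤ j.1) \ I} → ℝ) → ℝ,
      CExp (tournUnif ℓ)
          (fun ω => tournScore ℓ ω ⟨0, by positivity⟩ = ((h - 1 : ℕ) : ℝ) ∧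
            ∀ i ∈ I, i.1 ≠ 0 → s i ≤ tournScore ℓ ω i)
          (fun ω => f fun j => tournScore ℓ ω j.1)
        = CExp (tournUnif ℓ)
          (fun ω => (h : ℝ) ≤ tournScore ℓ ω ⟨0, by positivity⟩ ∧
            ∀ i ∈ I, i.1 ≠ 0 → s i ≤ tournScore ℓ ω i)
          (fun ω => f fun j => tournScore ℓ ω j.1) := by
  intro f
  classical
  -- score of player 0 in normalized form
  have e0 : ∀ ω : TournOmega ℓ, tournScore ℓ ω (⟨0, by positivity⟩ : Fin (2^ℓ))
      = (kcard ℓ 0 ω ℓ : ℝ) := fun ω => tournScore_eq_kcard ℓ ω _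
  -- characterization of S₀ ≥ h
  have F2 : ∀ ω : TournOmega ℓ,
      ((h:ℝ) ≤ tournScore ℓ ω (⟨0, by positivity⟩ : Fin (2^ℓ)) ↔ pcond ℓ 0 ω h) := by
    intro ω
    rw [e0 ω, Nat.cast_le]
    exact kcard_le_iff ℓ 0 ℓ h ω hhℓ
  -- characterization of S₀ = h - 1
  have F3 : ∀ ω : TournOmega ℓ,
      (tournScore ℓ ω (⟨0, by positivity⟩ : Fin (2^ℓ)) = ((h-1:ℕ):ℝ)
        ↔ (pcond ℓ 0 ω (h-1) ∧ ¬ pcond ℓ 0 ω h)) := by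
    intro ω
    rw [e0 ω, Nat.cast_inj]
    have l1 := kcard_le_iff ℓ 0 ℓ (h-1) ω (by omega)
    have l2 := kcard_le_iff ℓ 0 ℓ h ω hhℓ
    constructor
    · intro he
      refine ⟨l1.mp (by omega), fun hp => ?_⟩
      have := l2.mpr hp
      omega
    · rintro ⟨hp1, hp2⟩
      have a1 := l1.mpr hp1
      have a2 : ¬ (h ≤ kcard ℓ 0 ω ℓ) := fun hle => hp2 (l2.mp hle)
      omega
  -- the positive-probability witness
  obtain ⟨ω₁, hB1⟩ := exists_of_Pr_pos hpos
  have hp01 : pcond ℓ 0 ω₁ h := (F2 ω₁).mp hB1.1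
  -- the thresholds of block players in I are at most h-1
  have hsb : ∀ i ∈ I, i.1 ≠ 0 → i.1 < 2^h → s i ≤ ((h-1 : ℕ) : ℝ) := by
    intro i hi hne hlt
    have h1 : s i ≤ tournScore ℓ ω₁ i := hB1.2 i hi hne
    have h2 : ¬ pcond ℓ i.1 ω₁ h := pcond_conflict ℓ h hhℓ i.1 hne hlt ω₁ hp01
    have h3 : kcard ℓ i.1 ω₁ ℓ ≤ h - 1 := by
      by_contra hc
      exact h2 ((kcard_le_iff ℓ i.1 ℓ h ω₁ hhℓ).mp (by omega))
    rw [tournScore_eq_kcard] at h1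
    exact le_trans h1 (Nat.cast_le.mpr h3)
  -- block constraints can be tested on the first h-1 rounds
  have hTiff : ∀ (ω : TournOmega ℓ), ∀ i ∈ I, i.1 ≠ 0 → i.1 < 2^h →
      (s i ≤ tournScore ℓ ω i ↔ s i ≤ (kcard ℓ i.1 ω (h-1) : ℝ)) := by
    intro ω i hi hne hlt
    have hb := hsb i hi hne hlt
    rw [tournScore_eq_kcard, kcard_min ℓ i.1 ℓ (h-1) ω (by omega), Nat.cast_min]
    constructor
    · intro hle; exact le_min hle hb
    · intro hle; exact le_trans hle (min_le_left _ _)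
  have h2hpos : (0:ℕ) < 2^h := by positivity
  -- splitting the constraint event
  have hsplit : ∀ ω : TournOmega ℓ, ((∀ i ∈ I, i.1 ≠ 0 → s i ≤ tournScore ℓ ω i)
      ↔ (CinP ℓ h I s ω ∧ CoutP ℓ h I s ω)) := by
    intro ω
    constructor
    · intro hC
      exact ⟨fun i hi hne hlt => (hTiff ω i hi hne hlt).mp (hC i hi hne),
        fun i hi hge => hC i hi (by omega)⟩
    · rintro ⟨h1, h2⟩ i hi hne
      by_cases hlt : i.1 < 2^h
      · exact (hTiff ω i hi hne hlt).mpr (h1 i hi hne hlt)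
      · exact h2 i hi (by omega)
  -- event identifications
  have hAiff : ∀ ω : TournOmega ℓ,
      ((tournScore ℓ ω (⟨0, by positivity⟩ : Fin (2^ℓ)) = ((h-1:ℕ):ℝ) ∧
        ∀ i ∈ I, i.1 ≠ 0 → s i ≤ tournScore ℓ ω i)
      ↔ (P1P ℓ h I s ω ∧ CoutP ℓ h I s ω)) := by
    intro ω
    rw [F3 ω, hsplit ω]
    unfold P1P
    tauto
  have hBiff : ∀ ω : TournOmega ℓ,
      (((h:ℝ) ≤ tournScore ℓ ω (⟨0, by positivity⟩ : Fin (2^ℓ)) ∧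
        ∀ i ∈ I, i.1 ≠ 0 → s i ≤ tournScore ℓ ω i)
      ↔ (P2P ℓ h I s ω ∧ CoutP ℓ h I s ω)) := by
    intro ω
    rw [F2 ω, hsplit ω]
    unfold P2P
    tauto
  -- witnesses for the block events
  have hCin1 : CinP ℓ h I s ω₁ :=
    fun i hi hne hlt => (hTiff ω₁ i hi hne hlt).mp (hB1.2 i hi hne)
  have hw2 : P2P ℓ h I s ω₁ := ⟨hp01, hCin1⟩
  have hw1 : P1P ℓ h I s (flipBit ℓ h ω₁) := by
    refine ⟨⟨?_, not_pcond_flipBit_zero ℓ h hh1 hhℓ ω₁⟩, ?_⟩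
    · rw [pcond_flipBit ℓ h 0 ω₁ (h-1) le_rfl]
      exact pcond_mono (by omega) hp01
    · exact (CinP_flip ℓ h I s ω₁).mpr hCin1
  -- the function depends only on the outside scores
  have hf_mrg : ∀ a b : TournOmega ℓ,
      (fun ω : TournOmega ℓ => f fun j => tournScore ℓ ω j.1) (mrg ℓ h a b)
        = (fun ω : TournOmega ℓ => f fun j => tournScore ℓ ω j.1) b := by
    intro a b
    simp only []
    congr 1
    funext j
    have hj : 2^h ≤ j.1.1 := by
      have := j.2
      simp only [Finset.mem_sdiff, Finset.mem_filter, Finset.mem_univ, true_and] at this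
      exact this.1
    exact tournScore_mrg_out ℓ h j.1 hj a b
  -- conclude
  rw [CExp_congr (tournUnif ℓ) _ (fun ω => P1P ℓ h I s ω ∧ CoutP ℓ h I s ω) _ hAiff,
      CExp_congr (tournUnif ℓ) _ (fun ω => P2P ℓ h I s ω ∧ CoutP ℓ h I s ω) _ hBiff,
      cexp_factor ℓ h (P1P ℓ h I s) (CoutP ℓ h I s) _
        (P1P_mrg ℓ h I s) (CoutP_mrg ℓ h I s) hf_mrg ⟨flipBit ℓ h ω₁, hw1⟩,
      cexp_factor ℓ h (P2P ℓ h I s) (CoutP ℓ h I s) _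
        (P2P_mrg ℓ h I s) (CoutP_mrg ℓ h I s) hf_mrg ⟨ω₁, hw2⟩]
end
end
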